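/- arXiv:1306.2914 — 3 statements merged into one kernel-verified Lean document; each statement's English description precedes it below -/
import Mathlib

section
/- For every λ ∈ ℂ the series f' + Σ_{k=1}^∞ (λᵏ/(2k)!)·((f'/f)·φ_{2k} + 2k·ψ_{2k−1}) and Σ_{k=0}^∞ (λᵏ/(2k+1)!)·((f'/f)·φ_{2k+1} + (2k+1)·ψ_{2k}) converge uniformly on [a,b], and their sums equal y₁' and y₂' respectively, where y₁ := Σ_{k=0}^∞ (λᵏ/(2k)!)·φ_{2k} and y₂ := Σ_{k=0}^∞ (λᵏ/(2k+1)!)·φ_{2k+1}. -/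
open Set MeasureTheory Filter Topology

section AuxLemmas
variable {a b x₀ : ℝ}

lemma recAux (hab : a ≤ b) (hx₀ : x₀ ∈ Icc a b)
    (G : ℕ → ℝ → ℂ) (w : ℕ → ℝ → ℂ) {M : ℝ}
    (hG0 : ∀ x, G 0 x = 1)
    (hrec : ∀ n x, G (n + 1) x = ((n : ℂ) + 1) * ∫ s in x₀..x, G n s * w n s)
    (hw : ∀ n, ContinuousOn (w n) (Icc a b))
    (hwM : ∀ n, ∀ x ∈ Icc a b, ‖w n x‖ ≤ M) :
    ∀ n, ContinuousOn (G n) (Icc a b)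
      ∧ (∀ x ∈ Icc a b, ‖G n x‖ ≤ (M * |x - x₀|) ^ n)
      ∧ ∀ x ∈ Icc a b, HasDerivWithinAt (G (n + 1))
          (((n : ℂ) + 1) * (G n x * w n x)) (Icc a b) x := by
  have hM0 : 0 ≤ M := le_trans (norm_nonneg _) (hwM 0 x₀ hx₀)
  have hsub : ∀ {x}, x ∈ Icc a b → uIcc x₀ x ⊆ Icc a b := fun hx => uIcc_subset_Icc hx₀ hx
  have hstep : ∀ n, ContinuousOn (G n) (Icc a b) →
      ∀ x ∈ Icc a b, HasDerivWithinAt (G (n + 1))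
        (((n : ℂ) + 1) * (G n x * w n x)) (Icc a b) x := by
    intro n hcn x hx
    have hgc : ContinuousOn (fun s => G n s * w n s) (Icc a b) := hcn.mul (hw n)
    have hint : IntervalIntegrable (fun s => G n s * w n s) volume x₀ x :=
      (hgc.mono (hsub hx)).intervalIntegrable
    haveI : Fact (x ∈ Icc a b) := ⟨hx⟩
    have hd : HasDerivWithinAt (fun u => ∫ s in x₀..u, G n s * w n s)
        (G n x * w n x) (Icc a b) x :=
      intervalIntegral.integral_hasDerivWithinAt_right hint
        (hgc.stronglyMeasurableAtFilter_nhdsWithin measurableSet_Icc x)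
        (hgc x hx)
    exact (hd.const_mul ((n : ℂ) + 1)).congr (fun y _ => hrec n y) (hrec n x)
  have hcont : ∀ n, ContinuousOn (G n) (Icc a b) := by
    intro n
    induction n with
    | zero => exact continuousOn_const.congr (fun x _ => hG0 x)
    | succ n ih => exact fun x hx => ((hstep n ih x hx).continuousWithinAt)
  have hbound : ∀ n, ∀ x ∈ Icc a b, ‖G n x‖ ≤ (M * |x - x₀|) ^ n := by
    intro n
    induction n with
    | zero => intro x hx; simp [hG0]
    | succ n ih =>
      intro x hx
      rw [hrec n x]
      have hib : IntervalIntegrable (fun s => M ^ (n + 1) * |s - x₀| ^ n) volume x₀ x := by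
        apply Continuous.intervalIntegrable
        continuity
      have h1 : ‖∫ s in x₀..x, G n s * w n s‖
          ≤ |∫ s in x₀..x, M ^ (n + 1) * |s - x₀| ^ n| := by
        apply intervalIntegral.norm_integral_le_abs_of_norm_le _ hib
        filter_upwards [ae_restrict_mem measurableSet_uIoc] with t ht
        have hts : t ∈ Icc a b := hsub hx (uIoc_subset_uIcc ht)
        calc ‖G n t * w n t‖ = ‖G n t‖ * ‖w n t‖ := norm_mul _ _
          _ ≤ (M * |t - x₀|) ^ n * M :=
              mul_le_mul (ih t hts) (hwM n t hts) (norm_nonneg _)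
                (pow_nonneg (mul_nonneg hM0 (abs_nonneg _)) n)
          _ = M ^ (n + 1) * |t - x₀| ^ n := by rw [mul_pow]; ring
      have h2 : |∫ s in x₀..x, M ^ (n + 1) * |s - x₀| ^ n|
          = M ^ (n + 1) * (|x - x₀| ^ (n + 1) / (n + 1)) := by
        rw [intervalIntegral.integral_const_mul, abs_mul, abs_of_nonneg (pow_nonneg hM0 _),
          intervalIntegral.abs_intervalIntegral_eq, integral_pow_abs_sub_uIoc, abs_of_nonneg]
        positivity
      have hnc : ‖((n : ℂ) + 1)‖ = (n : ℝ) + 1 := by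
        have : ((n : ℂ) + 1) = ((n + 1 : ℕ) : ℂ) := by push_cast; ring
        rw [this, Complex.norm_natCast]; push_cast; ring
      calc ‖((n : ℂ) + 1) * ∫ s in x₀..x, G n s * w n s‖
          = ((n : ℝ) + 1) * ‖∫ s in x₀..x, G n s * w n s‖ := by rw [norm_mul, hnc]
        _ ≤ ((n : ℝ) + 1) * (M ^ (n + 1) * (|x - x₀| ^ (n + 1) / (n + 1))) := by
            exact mul_le_mul_of_nonneg_left (h1.trans (le_of_eq h2)) (by positivity)
        _ = (M * |x - x₀|) ^ (n + 1) := by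
            rw [mul_pow]; field_simp
  exact fun n => ⟨hcont n, hbound n, hstep n (hcont n)⟩

lemma seriesAux (hab : a < b) (hx₀ : x₀ ∈ Icc a b)
    (u v : ℕ → ℝ → ℂ) (p : ℕ → ℝ) (hp : Summable p)
    (hucont : ∀ k, ContinuousOn (u k) (Icc a b))
    (hvcont : ∀ k, ContinuousOn (v k) (Icc a b))
    (hder : ∀ k, ∀ x ∈ Icc a b, HasDerivWithinAt (u k) (v k x) (Icc a b) x)
    (hup : ∀ k, ∀ x ∈ Icc a b, ‖u k x‖ ≤ p k)
    (hvp : ∀ k, ∀ x ∈ Icc a b, ‖v k x‖ ≤ p k) :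
    TendstoUniformlyOn (fun N x => ∑ k ∈ Finset.range N, v k x)
      (derivWithin (fun x => ∑' k, u k x) (Icc a b)) atTop (Icc a b) := by
  have hsub : ∀ {x}, x ∈ Icc a b → uIcc x₀ x ⊆ Icc a b := fun hx => uIcc_subset_Icc hx₀ hx
  set g : ℝ → ℂ := fun x => ∑' k, v k x with hg
  have TU : TendstoUniformlyOn (fun N x => ∑ k ∈ Finset.range N, v k x) g atTop (Icc a b) :=
    tendstoUniformlyOn_tsum_nat hp (fun k x hx => hvp k x hx)
  have hvsumc : ∀ n : ℕ, ContinuousOn (fun t => ∑ k ∈ Finset.range n, v k t) (Icc a b) :=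
    fun n => continuousOn_finset_sum _ (fun k _ => hvcont k)
  have gcont : ContinuousOn g (Icc a b) :=
    TU.continuousOn (Eventually.of_forall hvsumc).frequently
  have hsum_u : ∀ x ∈ Icc a b, Summable (fun k => u k x) := fun x hx =>
    Summable.of_norm (Summable.of_nonneg_of_le (fun k => norm_nonneg _)
      (fun k => hup k x hx) hp)
  have key : ∀ x ∈ Icc a b, (∑' k, u k x) = (∑' k, u k x₀) + ∫ t in x₀..x, g t := by
    intro x hx
    have hFn : ∀ n : ℕ, (∫ t in x₀..x, ∑ k ∈ Finset.range n, v k t)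
        = (∑ k ∈ Finset.range n, u k x) - ∑ k ∈ Finset.range n, u k x₀ := by
      intro n
      apply intervalIntegral.integral_eq_sub_of_hasDeriv_right
      · exact (continuousOn_finset_sum _ fun k _ => hucont k).mono (hsub hx)
      · intro t ht
        have hts : t ∈ Icc a b :=
          ⟨le_trans (le_inf hx₀.1 hx.1) ht.1.le, le_trans ht.2.le (sup_le hx₀.2 hx.2)⟩
        have htb : t < b := lt_of_lt_of_le ht.2 (sup_le hx₀.2 hx.2)
        have hmem : Icc a b ∈ 𝓝[>] t :=
          mem_of_superset (Ioc_mem_nhdsGT_of_mem ⟨le_refl t, htb⟩)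
            (fun y hy => ⟨le_trans hts.1 hy.1.le, hy.2⟩)
        exact HasDerivWithinAt.fun_sum (fun k _ => (hder k t hts).mono_of_mem_nhdsWithin hmem)
      · exact ((hvsumc n).mono (hsub hx)).intervalIntegrable
    have hxd : |x - x₀| ≤ b - a := by
      rw [abs_sub_le_iff]
      constructor <;> [linarith [hx.2, hx₀.1]; linarith [hx.1, hx₀.2]]
    have hgint : IntervalIntegrable g volume x₀ x := (gcont.mono (hsub hx)).intervalIntegrable
    have hL : Tendsto (fun n => ∫ t in x₀..x, ∑ k ∈ Finset.range n, v k t) atTop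
        (𝓝 (∫ t in x₀..x, g t)) := by
      refine Metric.tendsto_nhds.mpr fun ε hε => ?_
      have hba : (0:ℝ) < b - a + 1 := by linarith
      have hε' : 0 < ε / (b - a + 1) := by positivity
      filter_upwards [(Metric.tendstoUniformlyOn_iff.mp TU) _ hε'] with n hn
      have hnint : IntervalIntegrable (fun t => ∑ k ∈ Finset.range n, v k t) volume x₀ x :=
        ((hvsumc n).mono (hsub hx)).intervalIntegrable
      rw [dist_eq_norm, ← intervalIntegral.integral_sub hnint hgint]
      have hb1 : ‖∫ t in x₀..x, ((∑ k ∈ Finset.range n, v k t) - g t)‖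
          ≤ ε / (b - a + 1) * |x - x₀| := by
        apply intervalIntegral.norm_integral_le_of_norm_le_const
        intro t ht
        have hts : t ∈ Icc a b := hsub hx (uIoc_subset_uIcc ht)
        rw [← dist_eq_norm, dist_comm]
        exact (hn t hts).le
      calc ‖∫ t in x₀..x, ((∑ k ∈ Finset.range n, v k t) - g t)‖
          ≤ ε / (b - a + 1) * |x - x₀| := hb1
        _ ≤ ε / (b - a + 1) * (b - a) := by
            exact mul_le_mul_of_nonneg_left hxd (le_of_lt hε')
        _ < ε := by
            rw [div_mul_eq_mul_div, div_lt_iff₀ hba]; nlinarith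
    have hR : Tendsto (fun n => (∑ k ∈ Finset.range n, u k x) - ∑ k ∈ Finset.range n, u k x₀)
        atTop (𝓝 ((∑' k, u k x) - ∑' k, u k x₀)) :=
      ((hsum_u x hx).hasSum.tendsto_sum_nat).sub ((hsum_u x₀ hx₀).hasSum.tendsto_sum_nat)
    have := tendsto_nhds_unique (hL.congr hFn) hR
    linear_combination -this
  have hderivS : ∀ x ∈ Icc a b, derivWithin (fun x => ∑' k, u k x) (Icc a b) x = g x := by
    intro x hx
    haveI : Fact (x ∈ Icc a b) := ⟨hx⟩
    have hgint : IntervalIntegrable g volume x₀ x := (gcont.mono (hsub hx)).intervalIntegrable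
    have hprim : HasDerivWithinAt (fun y => (∑' k, u k x₀) + ∫ t in x₀..y, g t)
        (g x) (Icc a b) x :=
      (intervalIntegral.integral_hasDerivWithinAt_right hgint
        (gcont.stronglyMeasurableAtFilter_nhdsWithin measurableSet_Icc x)
        (gcont x hx)).const_add _
    have hS : HasDerivWithinAt (fun x => ∑' k, u k x) (g x) (Icc a b) x :=
      hprim.congr (fun y hy => key y hy) (key x hx)
    exact hS.derivWithin (uniqueDiffOn_Icc hab x hx)
  exact TU.congr_right fun x hx => (hderivS x hx).symm

end AuxLemmas

/-- The recursive integrals `X⁽⁰⁾ ≡ 1`, `X⁽ⁿ⁾(x) = n ∫_{x₀}^x X⁽ⁿ⁻¹⁾(s) (f(s)²)^((−1)ⁿ) ds`. -/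
noncomputable def Xrec (x₀ : ℝ) (f : ℝ → ℂ) : ℕ → ℝ → ℂ
  | 0 => fun _ => 1
  | n + 1 => fun x => ((n : ℂ) + 1) * ∫ s in x₀..x, Xrec x₀ f n s * (f s ^ 2) ^ ((-1 : ℤ) ^ (n + 1))

/-- The recursive integrals `X̃⁽⁰⁾ ≡ 1`, `X̃⁽ⁿ⁾(x) = n ∫_{x₀}^x X̃⁽ⁿ⁻¹⁾(s) (f(s)²)^((−1)^(n−1)) ds`. -/
noncomputable def Xtrec (x₀ : ℝ) (f : ℝ → ℂ) : ℕ → ℝ → ℂ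
  | 0 => fun _ => 1
  | n + 1 => fun x => ((n : ℂ) + 1) * ∫ s in x₀..x, Xtrec x₀ f n s * (f s ^ 2) ^ ((-1 : ℤ) ^ n)

/-- `φ_k = f·X⁽ᵏ⁾` for odd `k`, `φ_k = f·X̃⁽ᵏ⁾` for even `k`. -/
noncomputable def phiF (x₀ : ℝ) (f : ℝ → ℂ) (k : ℕ) (x : ℝ) : ℂ :=
  if Odd k then f x * Xrec x₀ f k x else f x * Xtrec x₀ f k x

/-- `ψ_k = X̃⁽ᵏ⁾/f` for odd `k`, `ψ_k = X⁽ᵏ⁾/f` for even `k`. -/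
noncomputable def psiF (x₀ : ℝ) (f : ℝ → ℂ) (k : ℕ) (x : ℝ) : ℂ :=
  if Odd k then Xtrec x₀ f k x / f x else Xrec x₀ f k x / f x

/-- The SPPS solution `y₁ = Σ_{k=0}^∞ (λᵏ/(2k)!) φ_{2k}`. -/
noncomputable def sppsY1 (x₀ : ℝ) (f : ℝ → ℂ) (lam : ℂ) (x : ℝ) : ℂ :=
  ∑' k : ℕ, lam ^ k / (Nat.factorial (2 * k) : ℂ) * phiF x₀ f (2 * k) x

/-- The SPPS solution `y₂ = Σ_{k=0}^∞ (λᵏ/(2k+1)!) φ_{2k+1}`. -/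
noncomputable def sppsY2 (x₀ : ℝ) (f : ℝ → ℂ) (lam : ℂ) (x : ℝ) : ℂ :=
  ∑' k : ℕ, lam ^ k / (Nat.factorial (2 * k + 1) : ℂ) * phiF x₀ f (2 * k + 1) x

set_option maxHeartbeats 1000000 in
/-- the differentiated SPPS series converge uniformly on `[a,b]` and their
sums are the derivatives `y₁'` and `y₂'` respectively. -/
theorem spps_derivative_representation
    (a b : ℝ) (hab : a < b) (q : ℝ → ℂ) (hq : ContinuousOn q (Set.Icc a b))
    (f : ℝ → ℂ) (hf1 : ContDiffOn ℝ 1 f (Set.Icc a b)) (hf2 : ContDiffOn ℝ 2 f (Set.Ioo a b))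
    (hfeq : ∀ x ∈ Set.Ioo a b,
      derivWithin (derivWithin f (Set.Icc a b)) (Set.Icc a b) x = q x * f x)
    (hfne : ∀ x ∈ Set.Icc a b, f x ≠ 0)
    (x₀ : ℝ) (hx₀ : x₀ ∈ Set.Icc a b) (lam : ℂ) :
    TendstoUniformlyOn
      (fun N x => derivWithin f (Set.Icc a b) x
        + ∑ k ∈ Finset.Icc 1 N, lam ^ k / (Nat.factorial (2 * k) : ℂ) *
            ((derivWithin f (Set.Icc a b) x / f x) * phiF x₀ f (2 * k) x
              + (2 * k : ℂ) * psiF x₀ f (2 * k - 1) x))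
      (derivWithin (sppsY1 x₀ f lam) (Set.Icc a b)) atTop (Set.Icc a b) ∧
    TendstoUniformlyOn
      (fun N x => ∑ k ∈ Finset.range N, lam ^ k / (Nat.factorial (2 * k + 1) : ℂ) *
          ((derivWithin f (Set.Icc a b) x / f x) * phiF x₀ f (2 * k + 1) x
            + (2 * k + 1 : ℂ) * psiF x₀ f (2 * k) x))
      (derivWithin (sppsY2 x₀ f lam) (Set.Icc a b)) atTop (Set.Icc a b) := by
  classical
  have hab' : a ≤ b := hab.le
  have hUD : UniqueDiffOn ℝ (Set.Icc a b) := uniqueDiffOn_Icc hab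
  have hfc : ContinuousOn f (Set.Icc a b) := hf1.continuousOn
  have hfd : ∀ x ∈ Set.Icc a b, HasDerivWithinAt f (derivWithin f (Set.Icc a b) x)
      (Set.Icc a b) x := fun x hx => (hf1.differentiableOn one_ne_zero x hx).hasDerivWithinAt
  have hf'c : ContinuousOn (derivWithin f (Set.Icc a b)) (Set.Icc a b) :=
    hf1.continuousOn_derivWithin hUD le_rfl
  have hexp : ∀ n : ℕ, ((-1:ℤ)^n = 1) ∨ ((-1:ℤ)^n = -1) := fun n =>
    (Nat.even_or_odd n).imp Even.neg_one_pow Odd.neg_one_pow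
  have hf2ne : ∀ x ∈ Set.Icc a b, f x ^ 2 ≠ 0 := fun x hx => pow_ne_zero 2 (hfne x hx)
  have hwcont : ∀ n : ℕ, ContinuousOn (fun x => (f x ^ 2) ^ ((-1:ℤ)^n)) (Set.Icc a b) := by
    intro n
    rcases hexp n with h | h <;> rw [h]
    · simp only [zpow_one]; exact hfc.pow 2
    · simp only [zpow_neg_one]; exact (hfc.pow 2).inv₀ hf2ne
  obtain ⟨Mf, hMf⟩ := isCompact_Icc.exists_bound_of_continuousOn hfc
  obtain ⟨Mi, hMi⟩ := isCompact_Icc.exists_bound_of_continuousOn (hfc.inv₀ hfne)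
  obtain ⟨Md, hMd⟩ := isCompact_Icc.exists_bound_of_continuousOn hf'c
  obtain ⟨M1, hM1⟩ := isCompact_Icc.exists_bound_of_continuousOn (hfc.pow 2)
  obtain ⟨M2, hM2⟩ := isCompact_Icc.exists_bound_of_continuousOn ((hfc.pow 2).inv₀ hf2ne)
  have hMf0 : 0 ≤ Mf := le_trans (norm_nonneg _) (hMf x₀ hx₀)
  have hMi0 : 0 ≤ Mi := le_trans (norm_nonneg _) (hMi x₀ hx₀)
  have hMd0 : 0 ≤ Md := le_trans (norm_nonneg _) (hMd x₀ hx₀)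
  set M : ℝ := max M1 M2 with hM
  have hwM : ∀ n : ℕ, ∀ x ∈ Set.Icc a b, ‖(f x ^ 2) ^ ((-1:ℤ)^n)‖ ≤ M := by
    intro n x hx
    rcases hexp n with h | h <;> rw [h]
    · rw [zpow_one]; exact le_trans (hM1 x hx) (le_max_left _ _)
    · rw [zpow_neg_one]; exact le_trans (hM2 x hx) (le_max_right _ _)
  have hM0 : 0 ≤ M := le_trans (norm_nonneg _) (hwM 0 x₀ hx₀)
  have hX := recAux hab' hx₀ (Xrec x₀ f) (fun n x => (f x ^ 2) ^ ((-1:ℤ) ^ (n+1)))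
    (fun _ => rfl) (fun n x => rfl) (fun n => hwcont (n+1)) (fun n x hx => hwM (n+1) x hx)
  have hXt := recAux hab' hx₀ (Xtrec x₀ f) (fun n x => (f x ^ 2) ^ ((-1:ℤ) ^ n))
    (fun _ => rfl) (fun n x => rfl) (fun n => hwcont n) (fun n x hx => hwM n x hx)
  set D : ℝ := M * (b - a) + 1 with hD
  have hD1 : (1:ℝ) ≤ D := by nlinarith [mul_nonneg hM0 (by linarith : (0:ℝ) ≤ b - a)]
  have hD0 : (0:ℝ) ≤ D := by linarith
  have hXb : ∀ n, ∀ x ∈ Set.Icc a b, ‖Xrec x₀ f n x‖ ≤ D ^ n := by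
    intro n x hx
    refine le_trans ((hX n).2.1 x hx) (pow_le_pow_left₀ (mul_nonneg hM0 (abs_nonneg _)) ?_ n)
    have h1 : |x - x₀| ≤ b - a := by
      rw [abs_sub_le_iff]
      constructor <;> [linarith [hx.2, hx₀.1]; linarith [hx.1, hx₀.2]]
    nlinarith [mul_le_mul_of_nonneg_left h1 hM0]
  have hXtb : ∀ n, ∀ x ∈ Set.Icc a b, ‖Xtrec x₀ f n x‖ ≤ D ^ n := by
    intro n x hx
    refine le_trans ((hXt n).2.1 x hx) (pow_le_pow_left₀ (mul_nonneg hM0 (abs_nonneg _)) ?_ n)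
    have h1 : |x - x₀| ≤ b - a := by
      rw [abs_sub_le_iff]
      constructor <;> [linarith [hx.2, hx₀.1]; linarith [hx.1, hx₀.2]]
    nlinarith [mul_le_mul_of_nonneg_left h1 hM0]
  have hphic : ∀ k, ContinuousOn (phiF x₀ f k) (Set.Icc a b) := by
    intro k
    by_cases h : Odd k
    · have he : phiF x₀ f k = fun x => f x * Xrec x₀ f k x := by
        funext x; simp only [phiF, if_pos h]
      rw [he]; exact hfc.mul (hX k).1
    · have he : phiF x₀ f k = fun x => f x * Xtrec x₀ f k x := by
        funext x; simp only [phiF, if_neg h]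
      rw [he]; exact hfc.mul (hXt k).1
  have hpsic : ∀ k, ContinuousOn (psiF x₀ f k) (Set.Icc a b) := by
    intro k
    by_cases h : Odd k
    · have he : psiF x₀ f k = fun x => Xtrec x₀ f k x / f x := by
        funext x; simp only [psiF, if_pos h]
      rw [he]; exact (hXt k).1.div hfc hfne
    · have he : psiF x₀ f k = fun x => Xrec x₀ f k x / f x := by
        funext x; simp only [psiF, if_neg h]
      rw [he]; exact (hX k).1.div hfc hfne
  have hphib : ∀ k, ∀ x ∈ Set.Icc a b, ‖phiF x₀ f k x‖ ≤ Mf * D ^ k := by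
    intro k x hx
    by_cases h : Odd k
    · rw [phiF, if_pos h, norm_mul]
      exact mul_le_mul (hMf x hx) (hXb k x hx) (norm_nonneg _) hMf0
    · rw [phiF, if_neg h, norm_mul]
      exact mul_le_mul (hMf x hx) (hXtb k x hx) (norm_nonneg _) hMf0
  have hpsib : ∀ k, ∀ x ∈ Set.Icc a b, ‖psiF x₀ f k x‖ ≤ D ^ k * Mi := by
    intro k x hx
    by_cases h : Odd k
    · rw [psiF, if_pos h, div_eq_mul_inv, norm_mul]
      exact mul_le_mul (hXtb k x hx) (hMi x hx) (norm_nonneg _) (pow_nonneg hD0 _)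
    · rw [psiF, if_neg h, div_eq_mul_inv, norm_mul]
      exact mul_le_mul (hXb k x hx) (hMi x hx) (norm_nonneg _) (pow_nonneg hD0 _)
  -- derivative of φ_{2k+1}
  have hphidOdd : ∀ (k : ℕ), ∀ x ∈ Set.Icc a b, HasDerivWithinAt (phiF x₀ f (2*k+1))
      (derivWithin f (Set.Icc a b) x / f x * phiF x₀ f (2*k+1) x
        + (2*(k:ℂ)+1) * psiF x₀ f (2*k) x) (Set.Icc a b) x := by
    intro k x hx
    have hO : Odd (2*k+1) := odd_two_mul_add_one k
    have hE : ¬ Odd (2*k) := by rw [Nat.odd_iff]; omega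
    have hfx := hfne x hx
    have hXd := (hX (2*k)).2.2 x hx
    have hd := (hfd x hx).mul hXd
    have hfun : ∀ y, phiF x₀ f (2*k+1) y = f y * Xrec x₀ f (2*k+1) y := fun y => by
      simp only [phiF, hO, if_true]
    have hval : derivWithin f (Set.Icc a b) x * Xrec x₀ f (2*k+1) x
        + f x * ((((2*k : ℕ) : ℂ)+1) * (Xrec x₀ f (2*k) x * (f x ^ 2) ^ ((-1:ℤ) ^ (2*k+1))))
        = derivWithin f (Set.Icc a b) x / f x * phiF x₀ f (2*k+1) x
          + (2*(k:ℂ)+1) * psiF x₀ f (2*k) x := by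
      rw [hfun, psiF, if_neg hE, Odd.neg_one_pow hO, zpow_neg_one]
      push_cast
      field_simp
    rw [← hval]
    exact hd.congr (fun y _ => hfun y) (hfun x)
  -- derivative of φ_{2j+2}
  have hphidEven : ∀ (j : ℕ), ∀ x ∈ Set.Icc a b, HasDerivWithinAt (phiF x₀ f (2*j+2))
      (derivWithin f (Set.Icc a b) x / f x * phiF x₀ f (2*j+2) x
        + ((2*j+2 : ℕ) : ℂ) * psiF x₀ f (2*j+1) x) (Set.Icc a b) x := by
    intro j x hx
    have hE : ¬ Odd (2*j+2) := by rw [Nat.odd_iff]; omega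
    have hO : Odd (2*j+1) := odd_two_mul_add_one j
    have hfx := hfne x hx
    have hXd := (hXt (2*j+1)).2.2 x hx
    rw [show (2*j+1)+1 = 2*j+2 from rfl] at hXd
    have hd := (hfd x hx).mul hXd
    have hfun : ∀ y, phiF x₀ f (2*j+2) y = f y * Xtrec x₀ f (2*j+2) y := fun y => by
      simp only [phiF, hE, if_false]
    have hval : derivWithin f (Set.Icc a b) x * Xtrec x₀ f (2*j+2) x
        + f x * ((((2*j+1 : ℕ) : ℂ)+1) * (Xtrec x₀ f (2*j+1) x * (f x ^ 2) ^ ((-1:ℤ) ^ (2*j+1))))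
        = derivWithin f (Set.Icc a b) x / f x * phiF x₀ f (2*j+2) x
          + ((2*j+2 : ℕ) : ℂ) * psiF x₀ f (2*j+1) x := by
      rw [hfun, psiF, if_pos hO, Odd.neg_one_pow hO, zpow_neg_one]
      push_cast
      field_simp
      ring
    rw [← hval]
    exact hd.congr (fun y _ => hfun y) (hfun x)
  -- common constants for the majorant series
  set A : ℝ := Md * Mi + 1 with hA
  have hA0 : (0:ℝ) ≤ A := by nlinarith [mul_nonneg hMd0 hMi0]
  have hA1 : (1:ℝ) ≤ A := by nlinarith [mul_nonneg hMd0 hMi0]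
  have hAz : ∀ z : ℝ, 0 ≤ z → Md * Mi * z ≤ A * z ∧ z ≤ A * z := by
    intro z hz
    constructor
    · calc Md * Mi * z ≤ Md * Mi * z + z := le_add_of_nonneg_right hz
        _ = A * z := by rw [hA]; ring
    · calc z ≤ Md * Mi * z + z := le_add_of_nonneg_left (mul_nonneg (mul_nonneg hMd0 hMi0) hz)
        _ = A * z := by rw [hA]; ring
  set R : ℝ := ‖lam‖ * D ^ 2 with hR
  have hR0 : (0:ℝ) ≤ R := mul_nonneg (norm_nonneg _) (by positivity)
  have hRk : ∀ k : ℕ, R ^ k = ‖lam‖ ^ k * D ^ (2*k) := by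
    intro k; rw [hR, mul_pow, ← pow_mul]
  have hfdiv : ∀ x ∈ Set.Icc a b, ‖derivWithin f (Set.Icc a b) x / f x‖ ≤ Md * Mi := by
    intro x hx
    rw [div_eq_mul_inv, norm_mul]
    exact mul_le_mul (hMd x hx) (hMi x hx) (norm_nonneg _) hMd0
  constructor
  · ---- PART 1
    -- the term functions
    have hder1 : ∀ k : ℕ, ∀ x ∈ Set.Icc a b, HasDerivWithinAt
        (fun y => lam ^ k / ((2*k).factorial : ℂ) * phiF x₀ f (2*k) y)
        (if k = 0 then derivWithin f (Set.Icc a b) x else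
          lam ^ k / ((2*k).factorial : ℂ) * (derivWithin f (Set.Icc a b) x / f x * phiF x₀ f (2*k) x
            + 2*(k:ℂ) * psiF x₀ f (2*k-1) x)) (Set.Icc a b) x := by
      intro k x hx
      cases k with
      | zero =>
        rw [if_pos rfl]
        have he : ∀ y, lam ^ 0 / ((2*0).factorial : ℂ) * phiF x₀ f (2*0) y = f y := by
          intro y; simp [phiF, Xtrec]
        exact (hfd x hx).congr (fun y _ => he y) (he x)
      | succ j =>
        rw [if_neg (Nat.succ_ne_zero j)]
        have e1 : 2*(j+1) = 2*j+2 := by ring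
        rw [e1]
        rw [show 2*j+2-1 = 2*j+1 from by omega]
        have e3 : (2*((j+1:ℕ):ℂ)) = ((2*j+2:ℕ):ℂ) := by push_cast; ring
        rw [e3]
        exact (hphidEven j x hx).const_mul (lam ^ (j+1) / ((2*j+2).factorial : ℂ))
    have hu1cont : ∀ k : ℕ, ContinuousOn
        (fun y => lam ^ k / ((2*k).factorial : ℂ) * phiF x₀ f (2*k) y) (Set.Icc a b) :=
      fun k => continuousOn_const.mul (hphic (2*k))
    have hv1cont : ∀ k : ℕ, ContinuousOn
        (fun x => if k = 0 then derivWithin f (Set.Icc a b) x else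
          lam ^ k / ((2*k).factorial : ℂ) * (derivWithin f (Set.Icc a b) x / f x * phiF x₀ f (2*k) x
            + 2*(k:ℂ) * psiF x₀ f (2*k-1) x)) (Set.Icc a b) := by
      intro k
      by_cases h : k = 0
      · simp only [h, if_true]
        simpa using hf'c
      · simp only [h, if_false]
        exact continuousOn_const.mul (((hf'c.div hfc hfne).mul (hphic (2*k))).add
          (continuousOn_const.mul (hpsic (2*k-1))))
    -- the majorant
    set p1 : ℕ → ℝ := fun k => ‖lam‖ ^ k / ((2*k).factorial : ℝ) *
      (A * (Mf * D^(2*k)) + ((2*k:ℕ):ℝ) * (D^(2*k-1) * Mi) + Md * D^(2*k)) with hp1def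
    have hp1nonneg : ∀ k, 0 ≤ p1 k := by
      intro k
      apply mul_nonneg (by positivity)
      have h1 : 0 ≤ A * (Mf * D^(2*k)) := mul_nonneg hA0 (mul_nonneg hMf0 (pow_nonneg hD0 _))
      have h2 : 0 ≤ ((2*k:ℕ):ℝ) * (D^(2*k-1) * Mi) :=
        mul_nonneg (by positivity) (mul_nonneg (pow_nonneg hD0 _) hMi0)
      have h3 : 0 ≤ Md * D^(2*k) := mul_nonneg hMd0 (pow_nonneg hD0 _)
      linarith
    have hp1sum : Summable p1 := by
      apply Summable.of_nonneg_of_le hp1nonneg ?_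
        (((Real.summable_pow_div_factorial R).mul_left (A * Mf + Mi * D + Md)))
      intro k
      have hfpos : (0:ℝ) < (k.factorial : ℝ) := by exact_mod_cast k.factorial_pos
      have hle1 : (k.factorial : ℝ) ≤ ((2*k).factorial : ℝ) := by
        exact_mod_cast Nat.factorial_le (by omega)
      have hfpos2 : (0:ℝ) < ((2*k).factorial : ℝ) := by exact_mod_cast (2*k).factorial_pos
      have hRk0 : 0 ≤ R ^ k := pow_nonneg hR0 k
      have piece1 : ‖lam‖ ^ k / ((2*k).factorial : ℝ) * (A * (Mf * D^(2*k)))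
          ≤ A * Mf * (R ^ k / (k.factorial : ℝ)) := by
        have e : ‖lam‖ ^ k / ((2*k).factorial : ℝ) * (A * (Mf * D^(2*k)))
            = A * Mf * (R ^ k / ((2*k).factorial : ℝ)) := by rw [hRk]; ring
        rw [e]
        exact mul_le_mul_of_nonneg_left
          (div_le_div_of_nonneg_left hRk0 hfpos hle1) (mul_nonneg hA0 hMf0)
      have piece3 : ‖lam‖ ^ k / ((2*k).factorial : ℝ) * (Md * D^(2*k))
          ≤ Md * (R ^ k / (k.factorial : ℝ)) := by
        have e : ‖lam‖ ^ k / ((2*k).factorial : ℝ) * (Md * D^(2*k))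
            = Md * (R ^ k / ((2*k).factorial : ℝ)) := by rw [hRk]; ring
        rw [e]
        exact mul_le_mul_of_nonneg_left
          (div_le_div_of_nonneg_left hRk0 hfpos hle1) hMd0
      have piece2 : ‖lam‖ ^ k / ((2*k).factorial : ℝ) * (((2*k:ℕ):ℝ) * (D^(2*k-1) * Mi))
          ≤ Mi * D * (R ^ k / (k.factorial : ℝ)) := by
        cases k with
        | zero =>
          simp only [Nat.mul_zero, Nat.cast_zero, zero_mul, mul_zero]
          positivity
        | succ j =>
          have hjfac : ((2*(j+1)).factorial : ℝ)
              = ((2*(j+1):ℕ):ℝ) * ((2*j+1).factorial : ℝ) := by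
            rw [show 2*(j+1) = (2*j+1)+1 from by ring]
            exact_mod_cast Nat.factorial_succ (2*j+1)
          have hsubidx : 2*(j+1)-1 = 2*j+1 := by omega
          have hcpos : (0:ℝ) < ((2*(j+1):ℕ):ℝ) := by positivity
          have e : ‖lam‖ ^ (j+1) / ((2*(j+1)).factorial : ℝ)
                * (((2*(j+1):ℕ):ℝ) * (D^(2*(j+1)-1) * Mi))
              = Mi * (‖lam‖^(j+1) * D^(2*j+1)) / ((2*j+1).factorial : ℝ) := by
            rw [hsubidx, hjfac]
            field_simp
          rw [e]
          have hle2 : ((j+1).factorial : ℝ) ≤ ((2*j+1).factorial : ℝ) := by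
            exact_mod_cast Nat.factorial_le (by omega)
          have hfp1 : (0:ℝ) < ((j+1).factorial : ℝ) := by exact_mod_cast (j+1).factorial_pos
          have step1 : Mi * (‖lam‖^(j+1) * D^(2*j+1)) / ((2*j+1).factorial : ℝ)
              ≤ Mi * (‖lam‖^(j+1) * D^(2*j+1)) / (((j+1).factorial : ℝ)) :=
            div_le_div_of_nonneg_left
              (mul_nonneg hMi0 (mul_nonneg (pow_nonneg (norm_nonneg _) _) (pow_nonneg hD0 _)))
              hfp1 hle2
          refine step1.trans ?_
          rw [hRk, show Mi * D * (‖lam‖ ^ (j+1) * D ^ (2*(j+1)) / ((j+1).factorial : ℝ))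
            = Mi * (‖lam‖^(j+1) * (D * D^(2*(j+1)))) / (((j+1).factorial : ℝ)) from by ring]
          apply div_le_div_of_nonneg_right ?_ hfp1.le
          · apply mul_le_mul_of_nonneg_left ?_ hMi0
            apply mul_le_mul_of_nonneg_left ?_ (pow_nonneg (norm_nonneg _) _)
            calc D^(2*j+1) ≤ D^(2*j+3) := pow_le_pow_right₀ hD1 (by omega)
              _ = D * D^(2*(j+1)) := by ring
      calc p1 k = ‖lam‖ ^ k / ((2*k).factorial : ℝ) * (A * (Mf * D^(2*k)))
            + ‖lam‖ ^ k / ((2*k).factorial : ℝ) * (((2*k:ℕ):ℝ) * (D^(2*k-1) * Mi))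
            + ‖lam‖ ^ k / ((2*k).factorial : ℝ) * (Md * D^(2*k)) := by rw [hp1def]; ring
        _ ≤ A * Mf * (R ^ k / (k.factorial : ℝ)) + Mi * D * (R ^ k / (k.factorial : ℝ))
            + Md * (R ^ k / (k.factorial : ℝ)) := by
            exact add_le_add (add_le_add piece1 piece2) piece3
        _ = (A * Mf + Mi * D + Md) * (R ^ k / (k.factorial : ℝ)) := by ring
    have hnorm1 : ∀ k : ℕ, ‖lam ^ k / ((2*k).factorial : ℂ)‖
        = ‖lam‖ ^ k / ((2*k).factorial : ℝ) := by
      intro k; rw [norm_div, norm_pow, Complex.norm_natCast]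
    have hup1 : ∀ k, ∀ x ∈ Set.Icc a b,
        ‖lam ^ k / ((2*k).factorial : ℂ) * phiF x₀ f (2*k) x‖ ≤ p1 k := by
      intro k x hx
      rw [norm_mul, hnorm1]
      apply mul_le_mul_of_nonneg_left ?_ (by positivity)
      refine (hphib (2*k) x hx).trans ?_
      have h2 : 0 ≤ ((2*k:ℕ):ℝ) * (D^(2*k-1) * Mi) :=
        mul_nonneg (by positivity) (mul_nonneg (pow_nonneg hD0 _) hMi0)
      have h3 : 0 ≤ Md * D^(2*k) := mul_nonneg hMd0 (pow_nonneg hD0 _)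
      have h4 := (hAz (Mf * D^(2*k)) (mul_nonneg hMf0 (pow_nonneg hD0 _))).2
      linarith
    have hvp1 : ∀ k, ∀ x ∈ Set.Icc a b,
        ‖if k = 0 then derivWithin f (Set.Icc a b) x else
          lam ^ k / ((2*k).factorial : ℂ) * (derivWithin f (Set.Icc a b) x / f x * phiF x₀ f (2*k) x
            + 2*(k:ℂ) * psiF x₀ f (2*k-1) x)‖ ≤ p1 k := by
      intro k x hx
      by_cases h : k = 0
      · subst h
        rw [if_pos rfl]
        refine (hMd x hx).trans ?_
        have : p1 0 = A * Mf + Md := by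
          rw [hp1def]; norm_num
        rw [this]
        nlinarith [mul_nonneg hA0 hMf0]
      · rw [if_neg h, norm_mul, hnorm1]
        apply mul_le_mul_of_nonneg_left ?_ (by positivity)
        have hc : ‖(2*(k:ℂ))‖ = ((2*k:ℕ):ℝ) := by
          rw [show (2*(k:ℂ)) = ((2*k:ℕ):ℂ) from by push_cast; ring, Complex.norm_natCast]
        refine (norm_add_le _ _).trans ?_
        have term1 : ‖derivWithin f (Set.Icc a b) x / f x * phiF x₀ f (2*k) x‖
            ≤ A * (Mf * D^(2*k)) := by
          rw [norm_mul]
          refine (mul_le_mul (hfdiv x hx) (hphib (2*k) x hx) (norm_nonneg _)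
            (mul_nonneg hMd0 hMi0)).trans ?_
          exact (hAz (Mf * D^(2*k)) (mul_nonneg hMf0 (pow_nonneg hD0 _))).1
        have term2 : ‖2*(k:ℂ) * psiF x₀ f (2*k-1) x‖
            ≤ ((2*k:ℕ):ℝ) * (D^(2*k-1) * Mi) := by
          rw [norm_mul, hc]
          exact mul_le_mul_of_nonneg_left (hpsib (2*k-1) x hx) (by positivity)
        have h3 : 0 ≤ Md * D^(2*k) := mul_nonneg hMd0 (pow_nonneg hD0 _)
        linarith [add_le_add term1 term2]
    have part1 := seriesAux hab hx₀
      (fun k y => lam ^ k / ((2*k).factorial : ℂ) * phiF x₀ f (2*k) y)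
      (fun k x => if k = 0 then derivWithin f (Set.Icc a b) x else
        lam ^ k / ((2*k).factorial : ℂ) * (derivWithin f (Set.Icc a b) x / f x * phiF x₀ f (2*k) x
          + 2*(k:ℂ) * psiF x₀ f (2*k-1) x))
      p1 hp1sum hu1cont hv1cont hder1 hup1 hvp1
    have part1' : TendstoUniformlyOn
        (fun N x => ∑ k ∈ Finset.range (N+1),
          (if k = 0 then derivWithin f (Set.Icc a b) x else
            lam ^ k / ((2*k).factorial : ℂ) * (derivWithin f (Set.Icc a b) x / f x * phiF x₀ f (2*k) x
              + 2*(k:ℂ) * psiF x₀ f (2*k-1) x)))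
        (derivWithin (sppsY1 x₀ f lam) (Set.Icc a b)) atTop (Set.Icc a b) :=
      fun U hU => (tendsto_add_atTop_nat 1).eventually (part1 U hU)
    refine part1'.congr (Eventually.of_forall fun N x hx => ?_)
    dsimp only
    have hset : Finset.range (N+1) = insert 0 (Finset.Icc 1 N) := by
      ext m
      simp only [Finset.mem_range, Finset.mem_insert, Finset.mem_Icc]
      omega
    rw [hset, Finset.sum_insert (by simp only [Finset.mem_Icc]; omega)]
    congr 1
    refine Finset.sum_congr rfl (fun k hk => ?_)
    rw [if_neg]
    have := (Finset.mem_Icc.mp hk).1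
    omega
  · ---- PART 2
    have hder2 : ∀ k : ℕ, ∀ x ∈ Set.Icc a b, HasDerivWithinAt
        (fun y => lam ^ k / ((2*k+1).factorial : ℂ) * phiF x₀ f (2*k+1) y)
        (lam ^ k / ((2*k+1).factorial : ℂ) * (derivWithin f (Set.Icc a b) x / f x * phiF x₀ f (2*k+1) x
          + (2*(k:ℂ)+1) * psiF x₀ f (2*k) x)) (Set.Icc a b) x :=
      fun k x hx => (hphidOdd k x hx).const_mul (lam ^ k / ((2*k+1).factorial : ℂ))
    have hu2cont : ∀ k : ℕ, ContinuousOn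
        (fun y => lam ^ k / ((2*k+1).factorial : ℂ) * phiF x₀ f (2*k+1) y) (Set.Icc a b) :=
      fun k => continuousOn_const.mul (hphic (2*k+1))
    have hv2cont : ∀ k : ℕ, ContinuousOn
        (fun x => lam ^ k / ((2*k+1).factorial : ℂ) * (derivWithin f (Set.Icc a b) x / f x * phiF x₀ f (2*k+1) x
          + (2*(k:ℂ)+1) * psiF x₀ f (2*k) x)) (Set.Icc a b) :=
      fun k => continuousOn_const.mul (((hf'c.div hfc hfne).mul (hphic (2*k+1))).add
        (continuousOn_const.mul (hpsic (2*k))))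
    set p2 : ℕ → ℝ := fun k => ‖lam‖ ^ k / ((2*k+1).factorial : ℝ) *
      (A * (Mf * D^(2*k+1)) + ((2*k+1:ℕ):ℝ) * (D^(2*k) * Mi)) with hp2def
    have hp2nonneg : ∀ k, 0 ≤ p2 k := by
      intro k
      apply mul_nonneg (by positivity)
      have h1 : 0 ≤ A * (Mf * D^(2*k+1)) := mul_nonneg hA0 (mul_nonneg hMf0 (pow_nonneg hD0 _))
      have h2 : 0 ≤ ((2*k+1:ℕ):ℝ) * (D^(2*k) * Mi) :=
        mul_nonneg (by positivity) (mul_nonneg (pow_nonneg hD0 _) hMi0)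
      linarith
    have hp2sum : Summable p2 := by
      apply Summable.of_nonneg_of_le hp2nonneg ?_
        (((Real.summable_pow_div_factorial R).mul_left (A * (Mf * D) + Mi * D)))
      intro k
      have hfpos : (0:ℝ) < (k.factorial : ℝ) := by exact_mod_cast k.factorial_pos
      have hle1 : (k.factorial : ℝ) ≤ ((2*k+1).factorial : ℝ) := by
        exact_mod_cast Nat.factorial_le (by omega)
      have hle2 : (k.factorial : ℝ) ≤ ((2*k).factorial : ℝ) := by
        exact_mod_cast Nat.factorial_le (by omega)
      have hRk0 : 0 ≤ R ^ k := pow_nonneg hR0 k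
      have hjfac : ((2*k+1).factorial : ℝ) = ((2*k+1:ℕ):ℝ) * ((2*k).factorial : ℝ) := by
        exact_mod_cast Nat.factorial_succ (2*k)
      have piece1 : ‖lam‖ ^ k / ((2*k+1).factorial : ℝ) * (A * (Mf * D^(2*k+1)))
          ≤ A * (Mf * D) * (R ^ k / (k.factorial : ℝ)) := by
        have e : ‖lam‖ ^ k / ((2*k+1).factorial : ℝ) * (A * (Mf * D^(2*k+1)))
            = A * (Mf * D) * (R ^ k / ((2*k+1).factorial : ℝ)) := by
          rw [hRk, pow_succ]; ring
        rw [e]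
        exact mul_le_mul_of_nonneg_left
          (div_le_div_of_nonneg_left hRk0 hfpos hle1)
          (mul_nonneg hA0 (mul_nonneg hMf0 hD0))
      have piece2 : ‖lam‖ ^ k / ((2*k+1).factorial : ℝ) * (((2*k+1:ℕ):ℝ) * (D^(2*k) * Mi))
          ≤ Mi * D * (R ^ k / (k.factorial : ℝ)) := by
        have hcpos : (0:ℝ) < ((2*k+1:ℕ):ℝ) := by positivity
        have e : ‖lam‖ ^ k / ((2*k+1).factorial : ℝ) * (((2*k+1:ℕ):ℝ) * (D^(2*k) * Mi))
            = Mi * (R ^ k / ((2*k).factorial : ℝ)) := by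
          rw [hjfac, hRk]
          field_simp
        rw [e]
        have hfpos2 : (0:ℝ) < ((2*k).factorial : ℝ) := by exact_mod_cast (2*k).factorial_pos
        have step1 : Mi * (R ^ k / ((2*k).factorial : ℝ)) ≤ Mi * (R ^ k / (k.factorial : ℝ)) :=
          mul_le_mul_of_nonneg_left (div_le_div_of_nonneg_left hRk0 hfpos hle2) hMi0
        refine step1.trans ?_
        rw [show Mi * D * (R ^ k / (k.factorial : ℝ))
          = D * (Mi * (R ^ k / (k.factorial : ℝ))) from by ring]
        exact le_mul_of_one_le_left (mul_nonneg hMi0 (div_nonneg hRk0 hfpos.le)) hD1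
      calc p2 k = ‖lam‖ ^ k / ((2*k+1).factorial : ℝ) * (A * (Mf * D^(2*k+1)))
            + ‖lam‖ ^ k / ((2*k+1).factorial : ℝ) * (((2*k+1:ℕ):ℝ) * (D^(2*k) * Mi)) := by
            rw [hp2def]; ring
        _ ≤ A * (Mf * D) * (R ^ k / (k.factorial : ℝ)) + Mi * D * (R ^ k / (k.factorial : ℝ)) :=
            add_le_add piece1 piece2
        _ = (A * (Mf * D) + Mi * D) * (R ^ k / (k.factorial : ℝ)) := by ring
    have hnorm2 : ∀ k : ℕ, ‖lam ^ k / ((2*k+1).factorial : ℂ)‖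
        = ‖lam‖ ^ k / ((2*k+1).factorial : ℝ) := by
      intro k; rw [norm_div, norm_pow, Complex.norm_natCast]
    have hup2 : ∀ k, ∀ x ∈ Set.Icc a b,
        ‖lam ^ k / ((2*k+1).factorial : ℂ) * phiF x₀ f (2*k+1) x‖ ≤ p2 k := by
      intro k x hx
      rw [norm_mul, hnorm2]
      apply mul_le_mul_of_nonneg_left ?_ (by positivity)
      refine (hphib (2*k+1) x hx).trans ?_
      have h2 : 0 ≤ ((2*k+1:ℕ):ℝ) * (D^(2*k) * Mi) :=
        mul_nonneg (by positivity) (mul_nonneg (pow_nonneg hD0 _) hMi0)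
      have h4 := (hAz (Mf * D^(2*k+1)) (mul_nonneg hMf0 (pow_nonneg hD0 _))).2
      linarith
    have hvp2 : ∀ k, ∀ x ∈ Set.Icc a b,
        ‖lam ^ k / ((2*k+1).factorial : ℂ) * (derivWithin f (Set.Icc a b) x / f x * phiF x₀ f (2*k+1) x
          + (2*(k:ℂ)+1) * psiF x₀ f (2*k) x)‖ ≤ p2 k := by
      intro k x hx
      rw [norm_mul, hnorm2]
      apply mul_le_mul_of_nonneg_left ?_ (by positivity)
      have hc : ‖(2*(k:ℂ)+1)‖ = ((2*k+1:ℕ):ℝ) := by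
        rw [show (2*(k:ℂ)+1) = ((2*k+1:ℕ):ℂ) from by push_cast; ring, Complex.norm_natCast]
      refine (norm_add_le _ _).trans ?_
      have term1 : ‖derivWithin f (Set.Icc a b) x / f x * phiF x₀ f (2*k+1) x‖
          ≤ A * (Mf * D^(2*k+1)) := by
        rw [norm_mul]
        refine (mul_le_mul (hfdiv x hx) (hphib (2*k+1) x hx) (norm_nonneg _)
          (mul_nonneg hMd0 hMi0)).trans ?_
        exact (hAz (Mf * D^(2*k+1)) (mul_nonneg hMf0 (pow_nonneg hD0 _))).1
      have term2 : ‖(2*(k:ℂ)+1) * psiF x₀ f (2*k) x‖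
          ≤ ((2*k+1:ℕ):ℝ) * (D^(2*k) * Mi) := by
        rw [norm_mul, hc]
        exact mul_le_mul_of_nonneg_left (hpsib (2*k) x hx) (by positivity)
      exact add_le_add term1 term2
    exact seriesAux hab hx₀
      (fun k y => lam ^ k / ((2*k+1).factorial : ℂ) * phiF x₀ f (2*k+1) y)
      (fun k x => lam ^ k / ((2*k+1).factorial : ℂ) * (derivWithin f (Set.Icc a b) x / f x * phiF x₀ f (2*k+1) x
        + (2*(k:ℂ)+1) * psiF x₀ f (2*k) x))
      p2 hp2sum hu2cont hv2cont hder2 hup2 hvp2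
end

section
/- Let h₁, h₂ ∈ ℂ and let K₁ be a transmutation kernel for (q,h₁). Define K₂(x,t) := (h₂−h₁)/2 + K₁(x,t) + ((h₂−h₁)/2)·∫_t^x (K₁(x,s) − K₁(x,−s)) ds. Then K₂ is a transmutation kernel for (q,h₂), i.e., K₂ is twice continuously differentiable and satisfies the hyperbolic equation and the Goursat data with h₂ in place of h₁. Moreover, for every continuous u : [-b,b] → ℂ and every x ∈ [-b,b], u(x) + ∫_{−x}^{x} K₂(x,t)·u(t) dt = w(x) + ∫_{−x}^{x} K₁(x,t)·w(t) dt, where w(t) := u(t) + ((h₂−h₁)/2)·∫_{−t}^{t} u(s) ds. -/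
open Set MeasureTheory Filter

/-- Second partial derivative with respect to the first variable, within `[-b,b]`. -/
noncomputable def d2x (b : ℝ) (K : ℝ → ℝ → ℂ) (x t : ℝ) : ℂ :=
  derivWithin (fun x' => derivWithin (fun x'' => K x'' t) (Set.Icc (-b) b) x') (Set.Icc (-b) b) x

/-- Second partial derivative with respect to the second variable, within `[-b,b]`. -/
noncomputable def d2t (b : ℝ) (K : ℝ → ℝ → ℂ) (x t : ℝ) : ℂ :=
  derivWithin (fun t' => derivWithin (fun t'' => K x t'') (Set.Icc (-b) b) t') (Set.Icc (-b) b) t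

/-- `K` is a transmutation kernel for `(q, h)` on `[-b,b]`: it is twice continuously
differentiable, satisfies `∂²K/∂x² − q(x)K = ∂²K/∂t²` on `[-b,b]²`, and the Goursat data
`K(x,x) = h/2 + (1/2)∫₀ˣ q` and `K(x,−x) = h/2`. -/
def IsTransmutationKernel (b : ℝ) (q : ℝ → ℂ) (h : ℂ) (K : ℝ → ℝ → ℂ) : Prop :=
  ContDiffOn ℝ 2 (fun p : ℝ × ℝ => K p.1 p.2) (Set.Icc (-b) b ×ˢ Set.Icc (-b) b) ∧
  (∀ x ∈ Set.Icc (-b) b, ∀ t ∈ Set.Icc (-b) b, d2x b K x t - q x * K x t = d2t b K x t) ∧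
  (∀ x ∈ Set.Icc (-b) b, K x x = h / 2 + (1 / 2) * ∫ s in (0:ℝ)..x, q s) ∧
  (∀ x ∈ Set.Icc (-b) b, K x (-x) = h / 2)

open intervalIntegral Asymptotics

variable {b : ℝ}


lemma uIcc_subset_S {a c : ℝ} (ha : a ∈ Icc (-b) b) (hc : c ∈ Icc (-b) b) :
    uIcc a c ⊆ Icc (-b) b :=
  Set.ordConnected_Icc.uIcc_subset ha hc

lemma h0S (hb : 0 < b) : (0:ℝ) ∈ Icc (-b) b := by rw [mem_Icc]; constructor <;> linarith

lemma uIoc_subset_S {a c : ℝ} (ha : a ∈ Icc (-b) b) (hc : c ∈ Icc (-b) b) :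
    Set.uIoc a c ⊆ Icc (-b) b :=
  Set.Ioc_subset_Icc_self.trans (uIcc_subset_S ha hc)

lemma myInt {f : ℝ → ℂ} (hf : ContinuousOn f (Icc (-b) b)) {a c : ℝ}
    (ha : a ∈ Icc (-b) b) (hc : c ∈ Icc (-b) b) : IntervalIntegrable f volume a c :=
  (hf.mono (uIcc_subset_S ha hc)).intervalIntegrable

/-- Core lemma: joint derivative of a parametric primitive on the square. -/
lemma hasFDeriv_primitive (hb : 0 < b) (F Fx : ℝ × ℝ → ℂ)
    (hF : ContinuousOn F (Icc (-b) b ×ˢ Icc (-b) b))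
    (hFx : ContinuousOn Fx (Icc (-b) b ×ˢ Icc (-b) b))
    (hd : ∀ p ∈ Icc (-b) b ×ˢ Icc (-b) b,
      HasDerivWithinAt (fun x => F (x, p.2)) (Fx p) (Icc (-b) b) p.1)
    {p₀ : ℝ × ℝ} (hp₀ : p₀ ∈ Icc (-b) b ×ˢ Icc (-b) b) :
    HasFDerivWithinAt (fun p : ℝ × ℝ => ∫ s in (0:ℝ)..p.2, F (p.1, s))
      ((ContinuousLinearMap.fst ℝ ℝ ℝ).smulRight (∫ s in (0:ℝ)..p₀.2, Fx (p₀.1, s))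
        + (ContinuousLinearMap.snd ℝ ℝ ℝ).smulRight (F p₀))
      (Icc (-b) b ×ˢ Icc (-b) b) p₀ := by
  set S := Icc (-b) b with hSdef
  set Q := S ×ˢ S with hQdef
  have hQc : IsCompact Q := isCompact_Icc.prod isCompact_Icc
  obtain ⟨hx₀S, hy₀S⟩ := (Set.mem_prod.1 hp₀)
  have h0S : (0:ℝ) ∈ S := by rw [hSdef, mem_Icc]; constructor <;> linarith
  -- slice continuity
  have hFslice : ∀ x ∈ S, ContinuousOn (fun s => F (x, s)) S := by
    intro x hx
    exact hF.comp (by fun_prop) (fun s hs => Set.mk_mem_prod hx hs)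
  rw [hasFDerivWithinAt_iff_isLittleO, isLittleO_iff]
  intro ε hε
  have hbpos : (0:ℝ) < b + 1 := by linarith
  set ε₁ : ℝ := ε / (2 * (b + 1)) with hε₁def
  have hε₁ : 0 < ε₁ := by positivity
  have hε₂ : 0 < ε / 2 := by positivity
  obtain ⟨δ₁, hδ₁, hucFx⟩ := Metric.uniformContinuousOn_iff.1
    (hQc.uniformContinuousOn_of_continuous hFx) ε₁ hε₁
  obtain ⟨δ₂, hδ₂, hucF⟩ := Metric.uniformContinuousOn_iff.1
    (hQc.uniformContinuousOn_of_continuous hF) (ε/2) hε₂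
  set δ : ℝ := min δ₁ δ₂ / 2 with hδdef
  have hδpos : 0 < δ := by positivity
  have hδltδ₁ : δ < δ₁ := by rw [hδdef]; have := min_le_left δ₁ δ₂; have := lt_min hδ₁ hδ₂; linarith
  have hδltδ₂ : δ < δ₂ := by rw [hδdef]; have := min_le_right δ₁ δ₂; have := lt_min hδ₁ hδ₂; linarith
  have hmem : Q ∩ Metric.ball p₀ δ ∈ nhdsWithin p₀ Q :=
    Filter.inter_mem self_mem_nhdsWithin
      (mem_nhdsWithin_of_mem_nhds (Metric.ball_mem_nhds p₀ hδpos))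
  filter_upwards [hmem]
  rintro p ⟨hpQ, hpball⟩
  obtain ⟨hxS, hyS⟩ := (Set.mem_prod.1 hpQ)
  obtain ⟨x, y⟩ := p
  obtain ⟨x₀, y₀⟩ := p₀
  simp only at hxS hyS hx₀S hy₀S ⊢
  have hdist : dist (x, y) (x₀, y₀) < δ := hpball
  have hdx : dist x x₀ < δ := lt_of_le_of_lt (by rw [Prod.dist_eq]; exact le_max_left _ _) hdist
  have hdy : dist y y₀ < δ := lt_of_le_of_lt (by rw [Prod.dist_eq]; exact le_max_right _ _) hdist
  -- decomposition
  have int1 : IntervalIntegrable (fun s => F (x, s)) volume 0 y₀ := myInt (hFslice x hxS) h0S hy₀S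
  have int2 : IntervalIntegrable (fun s => F (x, s)) volume y₀ y := myInt (hFslice x hxS) hy₀S hyS
  have int3 : IntervalIntegrable (fun s => F (x₀, s)) volume 0 y₀ := myInt (hFslice x₀ hx₀S) h0S hy₀S
  have int4 : IntervalIntegrable (fun s => Fx (x₀, s)) volume 0 y₀ := by
    apply myInt _ h0S hy₀S
    exact hFx.comp (by fun_prop) (fun s hs => Set.mk_mem_prod hx₀S hs)
  have key : (∫ s in (0:ℝ)..y, F (x, s)) - (∫ s in (0:ℝ)..y₀, F (x₀, s)) -
      (((ContinuousLinearMap.fst ℝ ℝ ℝ).smulRight (∫ s in (0:ℝ)..y₀, Fx (x₀, s))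
        + (ContinuousLinearMap.snd ℝ ℝ ℝ).smulRight (F (x₀, y₀))) ((x,y) - (x₀,y₀)))
      = (∫ s in (0:ℝ)..y₀, (F (x, s) - F (x₀, s) - (x - x₀) • Fx (x₀, s)))
        + (∫ s in y₀..y, (F (x, s) - F (x₀, y₀))) := by
    have e1 : (∫ s in (0:ℝ)..y, F (x, s))
        = (∫ s in (0:ℝ)..y₀, F (x, s)) + ∫ s in y₀..y, F (x, s) :=
      (integral_add_adjacent_intervals int1 int2).symm
    have i5 : IntervalIntegrable (fun s => (x - x₀) • Fx (x₀, s)) volume 0 y₀ :=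
      int4.smul (x - x₀)
    have e2 : (∫ s in (0:ℝ)..y₀, (F (x, s) - F (x₀, s) - (x - x₀) • Fx (x₀, s)))
        = (∫ s in (0:ℝ)..y₀, F (x, s)) - (∫ s in (0:ℝ)..y₀, F (x₀, s))
          - (x - x₀) • (∫ s in (0:ℝ)..y₀, Fx (x₀, s)) := by
      rw [integral_sub (int1.sub int3) i5, integral_sub int1 int3, intervalIntegral.integral_smul]
    have e3 : (∫ s in y₀..y, (F (x, s) - F (x₀, y₀)))
        = (∫ s in y₀..y, F (x, s)) - (y - y₀) • F (x₀, y₀) := by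
      rw [integral_sub int2 intervalIntegrable_const, intervalIntegral.integral_const]
    rw [e1, e2, e3]
    simp only [ContinuousLinearMap.add_apply, ContinuousLinearMap.smulRight_apply,
      ContinuousLinearMap.coe_fst', ContinuousLinearMap.coe_snd', Prod.fst_sub, Prod.snd_sub]
    abel
  rw [key]
  -- bound term 1
  have bound1 : ‖∫ s in (0:ℝ)..y₀, (F (x, s) - F (x₀, s) - (x - x₀) • Fx (x₀, s))‖
      ≤ ε₁ * ‖x - x₀‖ * b := by
    have : ∀ s ∈ Set.uIoc (0:ℝ) y₀, ‖F (x, s) - F (x₀, s) - (x - x₀) • Fx (x₀, s)‖ ≤ ε₁ * ‖x - x₀‖ := by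
      intro s hs
      have hsS : s ∈ S := uIoc_subset_S h0S hy₀S hs
      set D : Set ℝ := S ∩ Metric.closedBall x₀ δ with hDdef
      have hx₀D : x₀ ∈ D := ⟨hx₀S, Metric.mem_closedBall_self hδpos.le⟩
      have hxD : x ∈ D := ⟨hxS, Metric.mem_closedBall.2 hdx.le⟩
      have hder : ∀ ξ ∈ D, HasDerivWithinAt (fun ξ' => F (ξ', s) - ξ' • Fx (x₀, s))
          (Fx (ξ, s) - Fx (x₀, s)) D ξ := by
        intro ξ hξ
        have hlin : HasDerivWithinAt (fun ξ' : ℝ => ξ' • Fx (x₀, s)) (Fx (x₀, s)) D ξ := by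
          simpa using (hasDerivWithinAt_id ξ D).smul_const (Fx (x₀, s))
        exact ((hd (ξ, s) (Set.mk_mem_prod hξ.1 hsS)).mono inter_subset_left).sub hlin
      have hbound : ∀ ξ ∈ D, ‖Fx (ξ, s) - Fx (x₀, s)‖ ≤ ε₁ := by
        intro ξ hξ
        have : dist (ξ, s) (x₀, s) < δ₁ := by
          rw [Prod.dist_eq, dist_self]
          exact sup_lt_iff.2 ⟨lt_of_le_of_lt (Metric.mem_closedBall.1 hξ.2) hδltδ₁, hδ₁⟩
        have := hucFx (ξ, s) (Set.mk_mem_prod hξ.1 hsS) (x₀, s) (Set.mk_mem_prod hx₀S hsS) this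
        rw [dist_eq_norm] at this
        exact this.le
      have := Convex.norm_image_sub_le_of_norm_hasDerivWithin_le hder hbound
        ((convex_Icc _ _).inter (convex_closedBall _ _)) hx₀D hxD
      calc ‖F (x, s) - F (x₀, s) - (x - x₀) • Fx (x₀, s)‖
          = ‖(F (x, s) - x • Fx (x₀, s)) - (F (x₀, s) - x₀ • Fx (x₀, s))‖ := by
            congr 1; rw [sub_smul]; abel
        _ ≤ ε₁ * ‖x - x₀‖ := this
    calc ‖∫ s in (0:ℝ)..y₀, (F (x, s) - F (x₀, s) - (x - x₀) • Fx (x₀, s))‖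
        ≤ ε₁ * ‖x - x₀‖ * |y₀ - 0| := intervalIntegral.norm_integral_le_of_norm_le_const this
      _ ≤ ε₁ * ‖x - x₀‖ * b := by
          apply mul_le_mul_of_nonneg_left _ (by positivity)
          rw [sub_zero, abs_le]
          exact ⟨hy₀S.1, hy₀S.2⟩
  -- bound term 2
  have bound2 : ‖∫ s in y₀..y, (F (x, s) - F (x₀, y₀))‖ ≤ (ε/2) * |y - y₀| := by
    apply intervalIntegral.norm_integral_le_of_norm_le_const
    intro s hs
    have hsS : s ∈ S := uIoc_subset_S hy₀S hyS hs
    have hd2 : dist (x, s) (x₀, y₀) < δ₂ := by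
      rw [Prod.dist_eq]
      have h1 : dist x x₀ < δ₂ := lt_trans hdx hδltδ₂
      have h2 : dist s y₀ < δ₂ := by
        have hsy : dist s y₀ ≤ dist y y₀ := by
          rw [Real.dist_eq, Real.dist_eq]
          rcases le_total y₀ y with h | h
          · rw [Set.uIoc_of_le h] at hs
            rw [abs_of_nonneg (by linarith [hs.1.le] : (0:ℝ) ≤ s - y₀),
              abs_of_nonneg (by linarith : (0:ℝ) ≤ y - y₀)]
            linarith [hs.2]
          · rw [Set.uIoc_of_ge h] at hs
            rw [abs_of_nonpos (by linarith [hs.2] : s - y₀ ≤ 0),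
              abs_of_nonpos (by linarith : y - y₀ ≤ 0)]
            linarith [hs.1.le]
        exact lt_of_le_of_lt hsy (lt_trans hdy hδltδ₂)
      exact max_lt h1 h2
    have := hucF (x, s) (Set.mk_mem_prod hxS hsS) (x₀, y₀) (Set.mk_mem_prod hx₀S hy₀S) hd2
    rw [dist_eq_norm] at this
    exact this.le
  -- combine
  have hnx : ‖x - x₀‖ ≤ ‖(x, y) - (x₀, y₀)‖ := by
    rw [Prod.norm_def]; exact le_max_left _ _
  have hny : |y - y₀| ≤ ‖(x, y) - (x₀, y₀)‖ := by
    rw [Prod.norm_def]; exact le_max_right _ _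
  calc ‖(∫ s in (0:ℝ)..y₀, (F (x, s) - F (x₀, s) - (x - x₀) • Fx (x₀, s)))
        + (∫ s in y₀..y, (F (x, s) - F (x₀, y₀)))‖
      ≤ ε₁ * ‖x - x₀‖ * b + (ε/2) * |y - y₀| := (norm_add_le _ _).trans (add_le_add bound1 bound2)
    _ ≤ ε₁ * b * ‖(x, y) - (x₀, y₀)‖ + (ε/2) * ‖(x, y) - (x₀, y₀)‖ := by
        apply add_le_add
        · rw [show ε₁ * ‖x - x₀‖ * b = ε₁ * b * ‖x - x₀‖ by ring]
          exact mul_le_mul_of_nonneg_left hnx (by positivity)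
        · exact mul_le_mul_of_nonneg_left hny (by positivity)
    _ ≤ ε * ‖(x, y) - (x₀, y₀)‖ := by
        have h1 : ε₁ * b ≤ ε / 2 := by
          rw [hε₁def, div_mul_eq_mul_div, div_le_div_iff₀ (by positivity) (by norm_num)]
          ring_nf
          nlinarith
        nlinarith [norm_nonneg ((x, y) - (x₀, y₀))]


/-- Continuity of the parametric primitive on the square, via Tietze extension. -/
lemma contOn_primitive (hb : 0 < b) (F : ℝ × ℝ → ℂ)
    (hF : ContinuousOn F (Icc (-b) b ×ˢ Icc (-b) b)) :
    ContinuousOn (fun p : ℝ × ℝ => ∫ s in (0:ℝ)..p.2, F (p.1, s))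
      (Icc (-b) b ×ˢ Icc (-b) b) := by
  have hQclosed : IsClosed (Icc (-b) b ×ˢ Icc (-b) b : Set (ℝ × ℝ)) :=
    isClosed_Icc.prod isClosed_Icc
  obtain ⟨g, hg⟩ := ContinuousMap.exists_restrict_eq (X := ℝ × ℝ) (Y := ℂ) hQclosed
    ⟨_, hF.restrict⟩
  have hgF : ∀ p ∈ Icc (-b) b ×ˢ Icc (-b) b, g p = F p := fun p hp =>
    ContinuousMap.congr_fun hg ⟨p, hp⟩
  have hcont : Continuous (fun p : ℝ × ℝ => ∫ s in (0:ℝ)..p.2, g (p.1, s)) :=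
    continuous_parametric_primitive_of_continuous (f := fun x s => g (x, s))
      (by exact g.continuous.comp (continuous_fst.prodMk continuous_snd))
  apply hcont.continuousOn.congr
  intro p hp
  obtain ⟨hp1, hp2⟩ := mem_prod.1 hp
  refine intervalIntegral.integral_congr fun s hs => ?_
  exact (hgF (p.1, s) (Set.mk_mem_prod hp1 (uIcc_subset_S (h0S hb) hp2 hs))).symm

/-- Derivative of a `C¹` function on the square along a curve inside `[-b,b]`. -/
lemma slice_gen {f : ℝ × ℝ → ℂ}
    (hf : ContDiffOn ℝ 1 f (Icc (-b) b ×ˢ Icc (-b) b)) {γ : ℝ → ℝ × ℝ} {v : ℝ × ℝ} {x : ℝ}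
    (hγ : HasDerivWithinAt γ v (Icc (-b) b) x)
    (hmaps : MapsTo γ (Icc (-b) b) (Icc (-b) b ×ˢ Icc (-b) b)) (hx : x ∈ Icc (-b) b) :
    HasDerivWithinAt (fun x' => f (γ x'))
      (fderivWithin ℝ f (Icc (-b) b ×ˢ Icc (-b) b) (γ x) v) (Icc (-b) b) x :=
  ((hf.differentiableOn one_ne_zero (γ x) (hmaps hx)).hasFDerivWithinAt).comp_hasDerivWithinAt
    x hγ hmaps

/-- Derivative of a parametric primitive along a curve inside `[-b,b]`. -/
lemma primitive_slice (hb : 0 < b) (F Fx : ℝ × ℝ → ℂ)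
    (hF : ContinuousOn F (Icc (-b) b ×ˢ Icc (-b) b))
    (hFx : ContinuousOn Fx (Icc (-b) b ×ˢ Icc (-b) b))
    (hd : ∀ p ∈ Icc (-b) b ×ˢ Icc (-b) b,
      HasDerivWithinAt (fun x => F (x, p.2)) (Fx p) (Icc (-b) b) p.1)
    {γ : ℝ → ℝ × ℝ} {v : ℝ × ℝ} {x : ℝ}
    (hγ : HasDerivWithinAt γ v (Icc (-b) b) x)
    (hmaps : MapsTo γ (Icc (-b) b) (Icc (-b) b ×ˢ Icc (-b) b)) (hx : x ∈ Icc (-b) b) :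
    HasDerivWithinAt (fun x' => ∫ s in (0:ℝ)..(γ x').2, F ((γ x').1, s))
      (v.1 • (∫ s in (0:ℝ)..(γ x).2, Fx ((γ x).1, s)) + v.2 • F (γ x)) (Icc (-b) b) x := by
  have h := (hasFDeriv_primitive hb F Fx hF hFx hd (hmaps hx)).comp_hasDerivWithinAt x hγ hmaps
  simpa [Function.comp_def] using h

/-- The parametric primitive is `C¹` on the square. -/
lemma contDiffOn_primitive_one (hb : 0 < b) (F Fx : ℝ × ℝ → ℂ)
    (hF : ContinuousOn F (Icc (-b) b ×ˢ Icc (-b) b))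
    (hFx : ContinuousOn Fx (Icc (-b) b ×ˢ Icc (-b) b))
    (hd : ∀ p ∈ Icc (-b) b ×ˢ Icc (-b) b,
      HasDerivWithinAt (fun x => F (x, p.2)) (Fx p) (Icc (-b) b) p.1) :
    ContDiffOn ℝ 1 (fun p : ℝ × ℝ => ∫ s in (0:ℝ)..p.2, F (p.1, s))
      (Icc (-b) b ×ˢ Icc (-b) b) := by
  have hS : UniqueDiffOn ℝ (Icc (-b) b) := uniqueDiffOn_Icc (by linarith)
  have hQ : UniqueDiffOn ℝ (Icc (-b) b ×ˢ Icc (-b) b) := hS.prod hS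
  rw [show (1 : WithTop ℕ∞) = 0 + 1 from rfl, contDiffOn_succ_iff_fderivWithin hQ]
  refine ⟨fun p hp => (hasFDeriv_primitive hb F Fx hF hFx hd hp).differentiableWithinAt,
    by simp, ?_⟩
  rw [contDiffOn_zero]
  have hform : ContinuousOn (fun p : ℝ × ℝ =>
      (ContinuousLinearMap.fst ℝ ℝ ℝ).smulRight (∫ s in (0:ℝ)..p.2, Fx (p.1, s))
        + (ContinuousLinearMap.snd ℝ ℝ ℝ).smulRight (F p)) (Icc (-b) b ×ˢ Icc (-b) b) := by
    apply ContinuousOn.add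
    · exact ((ContinuousLinearMap.smulRightL ℝ (ℝ × ℝ) ℂ
        (ContinuousLinearMap.fst ℝ ℝ ℝ)).continuous.comp_continuousOn
        (contOn_primitive hb Fx hFx))
    · exact ((ContinuousLinearMap.smulRightL ℝ (ℝ × ℝ) ℂ
        (ContinuousLinearMap.snd ℝ ℝ ℝ)).continuous.comp_continuousOn hF)
  apply hform.congr
  intro p hp
  exact (hasFDeriv_primitive hb F Fx hF hFx hd hp).fderivWithin (hQ p hp)

/-- The parametric primitive is `C²` on the square. -/
lemma contDiffOn_primitive_two (hb : 0 < b) (F Fx Fxx : ℝ × ℝ → ℂ)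
    (hF1 : ContDiffOn ℝ 1 F (Icc (-b) b ×ˢ Icc (-b) b))
    (hFx1 : ContDiffOn ℝ 1 Fx (Icc (-b) b ×ˢ Icc (-b) b))
    (hFxx : ContinuousOn Fxx (Icc (-b) b ×ˢ Icc (-b) b))
    (hd : ∀ p ∈ Icc (-b) b ×ˢ Icc (-b) b,
      HasDerivWithinAt (fun x => F (x, p.2)) (Fx p) (Icc (-b) b) p.1)
    (hd2 : ∀ p ∈ Icc (-b) b ×ˢ Icc (-b) b,
      HasDerivWithinAt (fun x => Fx (x, p.2)) (Fxx p) (Icc (-b) b) p.1) :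
    ContDiffOn ℝ 2 (fun p : ℝ × ℝ => ∫ s in (0:ℝ)..p.2, F (p.1, s))
      (Icc (-b) b ×ˢ Icc (-b) b) := by
  have hS : UniqueDiffOn ℝ (Icc (-b) b) := uniqueDiffOn_Icc (by linarith)
  have hQ : UniqueDiffOn ℝ (Icc (-b) b ×ˢ Icc (-b) b) := hS.prod hS
  have hF : ContinuousOn F (Icc (-b) b ×ˢ Icc (-b) b) := hF1.continuousOn
  have hFx : ContinuousOn Fx (Icc (-b) b ×ˢ Icc (-b) b) := hFx1.continuousOn
  rw [show (2 : WithTop ℕ∞) = 1 + 1 from rfl, contDiffOn_succ_iff_fderivWithin hQ]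
  refine ⟨fun p hp => (hasFDeriv_primitive hb F Fx hF hFx hd hp).differentiableWithinAt,
    by simp, ?_⟩
  have hform : ContDiffOn ℝ 1 (fun p : ℝ × ℝ =>
      (ContinuousLinearMap.fst ℝ ℝ ℝ).smulRight (∫ s in (0:ℝ)..p.2, Fx (p.1, s))
        + (ContinuousLinearMap.snd ℝ ℝ ℝ).smulRight (F p)) (Icc (-b) b ×ˢ Icc (-b) b) := by
    apply ContDiffOn.add
    · exact ((ContinuousLinearMap.smulRightL ℝ (ℝ × ℝ) ℂ
        (ContinuousLinearMap.fst ℝ ℝ ℝ)).contDiff.comp_contDiffOn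
        (contDiffOn_primitive_one hb Fx Fxx hFx hFxx hd2))
    · exact ((ContinuousLinearMap.smulRightL ℝ (ℝ × ℝ) ℂ
        (ContinuousLinearMap.snd ℝ ℝ ℝ)).contDiff.comp_contDiffOn hF1)
  apply hform.congr
  intro p hp
  exact (hasFDeriv_primitive hb F Fx hF hFx hd hp).fderivWithin (hQ p hp)


lemma negS {t : ℝ} (ht : t ∈ Icc (-b) b) : -t ∈ Icc (-b) b := by
  rw [mem_Icc] at *; constructor <;> linarith [ht.1, ht.2]

/-- first-variable partial derivative within the square -/
noncomputable def pdx (b : ℝ) (F : ℝ × ℝ → ℂ) : ℝ × ℝ → ℂ :=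
  fun p => fderivWithin ℝ F (Icc (-b) b ×ˢ Icc (-b) b) p (1, 0)

/-- second-variable partial derivative within the square -/
noncomputable def pdt (b : ℝ) (F : ℝ × ℝ → ℂ) : ℝ × ℝ → ℂ :=
  fun p => fderivWithin ℝ F (Icc (-b) b ×ˢ Icc (-b) b) p (0, 1)

lemma pdx_contDiffOn (hb : 0 < b) {F : ℝ × ℝ → ℂ}
    (hF : ContDiffOn ℝ 2 F (Icc (-b) b ×ˢ Icc (-b) b)) :
    ContDiffOn ℝ 1 (pdx b F) (Icc (-b) b ×ˢ Icc (-b) b) := by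
  have hS : UniqueDiffOn ℝ (Icc (-b) b) := uniqueDiffOn_Icc (by linarith)
  exact (ContinuousLinearMap.apply ℝ ℂ ((1:ℝ), (0:ℝ))).contDiff.comp_contDiffOn
    (hF.fderivWithin (hS.prod hS) (by norm_num))

lemma pdt_contDiffOn (hb : 0 < b) {F : ℝ × ℝ → ℂ}
    (hF : ContDiffOn ℝ 2 F (Icc (-b) b ×ˢ Icc (-b) b)) :
    ContDiffOn ℝ 1 (pdt b F) (Icc (-b) b ×ˢ Icc (-b) b) := by
  have hS : UniqueDiffOn ℝ (Icc (-b) b) := uniqueDiffOn_Icc (by linarith)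
  exact (ContinuousLinearMap.apply ℝ ℂ ((0:ℝ), (1:ℝ))).contDiff.comp_contDiffOn
    (hF.fderivWithin (hS.prod hS) (by norm_num))

lemma pdx_continuousOn (hb : 0 < b) {F : ℝ × ℝ → ℂ}
    (hF : ContDiffOn ℝ 1 F (Icc (-b) b ×ˢ Icc (-b) b)) :
    ContinuousOn (pdx b F) (Icc (-b) b ×ˢ Icc (-b) b) := by
  have hS : UniqueDiffOn ℝ (Icc (-b) b) := uniqueDiffOn_Icc (by linarith)
  exact (ContinuousLinearMap.apply ℝ ℂ ((1:ℝ), (0:ℝ))).continuous.comp_continuousOn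
    (hF.continuousOn_fderivWithin (hS.prod hS) le_rfl)

lemma pdt_continuousOn (hb : 0 < b) {F : ℝ × ℝ → ℂ}
    (hF : ContDiffOn ℝ 1 F (Icc (-b) b ×ˢ Icc (-b) b)) :
    ContinuousOn (pdt b F) (Icc (-b) b ×ˢ Icc (-b) b) := by
  have hS : UniqueDiffOn ℝ (Icc (-b) b) := uniqueDiffOn_Icc (by linarith)
  exact (ContinuousLinearMap.apply ℝ ℂ ((0:ℝ), (1:ℝ))).continuous.comp_continuousOn
    (hF.continuousOn_fderivWithin (hS.prod hS) le_rfl)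

lemma pdx_slice {F : ℝ × ℝ → ℂ}
    (hF : ContDiffOn ℝ 1 F (Icc (-b) b ×ˢ Icc (-b) b)) {x t : ℝ}
    (hx : x ∈ Icc (-b) b) (ht : t ∈ Icc (-b) b) :
    HasDerivWithinAt (fun x' => F (x', t)) (pdx b F (x, t)) (Icc (-b) b) x := by
  have hγ : HasDerivWithinAt (fun x' : ℝ => ((x' : ℝ), t)) ((1:ℝ), (0:ℝ)) (Icc (-b) b) x :=
    (hasDerivWithinAt_id x _).prodMk (hasDerivWithinAt_const x _ t)
  exact slice_gen hF hγ (fun y hy => Set.mk_mem_prod hy ht) hx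

lemma pdt_slice {F : ℝ × ℝ → ℂ}
    (hF : ContDiffOn ℝ 1 F (Icc (-b) b ×ˢ Icc (-b) b)) {x t : ℝ}
    (hx : x ∈ Icc (-b) b) (ht : t ∈ Icc (-b) b) :
    HasDerivWithinAt (fun t' => F (x, t')) (pdt b F (x, t)) (Icc (-b) b) t := by
  have hγ : HasDerivWithinAt (fun t' : ℝ => (x, (t' : ℝ))) ((0:ℝ), (1:ℝ)) (Icc (-b) b) t :=
    (hasDerivWithinAt_const t _ x).prodMk (hasDerivWithinAt_id t _)
  exact slice_gen hF hγ (fun y hy => Set.mk_mem_prod hx hy) ht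

lemma slice_diag {F : ℝ × ℝ → ℂ}
    (hF : ContDiffOn ℝ 1 F (Icc (-b) b ×ˢ Icc (-b) b)) {x : ℝ} (hx : x ∈ Icc (-b) b) :
    HasDerivWithinAt (fun x' => F (x', x')) (pdx b F (x, x) + pdt b F (x, x)) (Icc (-b) b) x := by
  have hγ : HasDerivWithinAt (fun x' : ℝ => ((x' : ℝ), (x' : ℝ))) ((1:ℝ), (1:ℝ)) (Icc (-b) b) x :=
    (hasDerivWithinAt_id x _).prodMk (hasDerivWithinAt_id x _)
  have h := slice_gen hF hγ (fun y hy => Set.mk_mem_prod hy hy) hx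
  have e : ((1:ℝ), (1:ℝ)) = ((1:ℝ), (0:ℝ)) + ((0:ℝ), (1:ℝ)) := by simp
  rwa [e, map_add] at h

lemma slice_anti {F : ℝ × ℝ → ℂ}
    (hF : ContDiffOn ℝ 1 F (Icc (-b) b ×ˢ Icc (-b) b)) {x : ℝ} (hx : x ∈ Icc (-b) b) :
    HasDerivWithinAt (fun x' => F (x', -x'))
      (pdx b F (x, -x) - pdt b F (x, -x)) (Icc (-b) b) x := by
  have hγ : HasDerivWithinAt (fun x' : ℝ => ((x' : ℝ), -(x' : ℝ))) ((1:ℝ), (-1:ℝ))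
      (Icc (-b) b) x :=
    (hasDerivWithinAt_id x _).prodMk (hasDerivWithinAt_id x _).neg
  have h := slice_gen hF hγ (fun y hy => Set.mk_mem_prod hy (negS hy)) hx
  have e : ((1:ℝ), (-1:ℝ)) = ((1:ℝ), (0:ℝ)) - ((0:ℝ), (1:ℝ)) := by simp [Prod.ext_iff]
  rwa [e, map_sub] at h

lemma slice_negt {F : ℝ × ℝ → ℂ}
    (hF : ContDiffOn ℝ 1 F (Icc (-b) b ×ˢ Icc (-b) b)) {x t : ℝ}
    (hx : x ∈ Icc (-b) b) (ht : t ∈ Icc (-b) b) :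
    HasDerivWithinAt (fun t' => F (x, -t')) (-(pdt b F (x, -t))) (Icc (-b) b) t := by
  have hγ : HasDerivWithinAt (fun t' : ℝ => (x, -(t' : ℝ))) ((0:ℝ), (-1:ℝ)) (Icc (-b) b) t :=
    (hasDerivWithinAt_const t _ x).prodMk (hasDerivWithinAt_id t _).neg
  have h := slice_gen hF hγ (fun y hy => Set.mk_mem_prod hx (negS hy)) ht
  have e : ((0:ℝ), (-1:ℝ)) = -((0:ℝ), (1:ℝ)) := by simp
  rwa [e, map_neg] at h

/-- conversion of iterated `derivWithin` (`d2x`-style) to iterated partials. -/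
lemma d2x_eq' (hb : 0 < b) {K : ℝ → ℝ → ℂ}
    (hK : ContDiffOn ℝ 2 (fun p : ℝ × ℝ => K p.1 p.2) (Icc (-b) b ×ˢ Icc (-b) b))
    {x t : ℝ} (hx : x ∈ Icc (-b) b) (ht : t ∈ Icc (-b) b) :
    derivWithin (fun x' => derivWithin (fun x'' => K x'' t) (Icc (-b) b) x') (Icc (-b) b) x
      = pdx b (pdx b (fun p : ℝ × ℝ => K p.1 p.2)) (x, t) := by
  have hS : UniqueDiffOn ℝ (Icc (-b) b) := uniqueDiffOn_Icc (by linarith)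
  have h1 : ∀ x' ∈ Icc (-b) b, derivWithin (fun x'' => K x'' t) (Icc (-b) b) x'
      = pdx b (fun p : ℝ × ℝ => K p.1 p.2) (x', t) := fun x' hx' =>
    (pdx_slice (hK.of_le one_le_two) hx' ht).derivWithin (hS x' hx')
  rw [derivWithin_congr h1 (h1 x hx)]
  exact (pdx_slice (pdx_contDiffOn hb hK) hx ht).derivWithin (hS x hx)

lemma d2t_eq' (hb : 0 < b) {K : ℝ → ℝ → ℂ}
    (hK : ContDiffOn ℝ 2 (fun p : ℝ × ℝ => K p.1 p.2) (Icc (-b) b ×ˢ Icc (-b) b))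
    {x t : ℝ} (hx : x ∈ Icc (-b) b) (ht : t ∈ Icc (-b) b) :
    derivWithin (fun t' => derivWithin (fun t'' => K x t'') (Icc (-b) b) t') (Icc (-b) b) t
      = pdt b (pdt b (fun p : ℝ × ℝ => K p.1 p.2)) (x, t) := by
  have hS : UniqueDiffOn ℝ (Icc (-b) b) := uniqueDiffOn_Icc (by linarith)
  have h1 : ∀ t' ∈ Icc (-b) b, derivWithin (fun t'' => K x t'') (Icc (-b) b) t'
      = pdt b (fun p : ℝ × ℝ => K p.1 p.2) (x, t') := fun t' ht' =>
    (pdt_slice (hK.of_le one_le_two) hx ht').derivWithin (hS t' ht')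
  rw [derivWithin_congr h1 (h1 t ht)]
  exact (pdt_slice (pdt_contDiffOn hb hK) hx ht).derivWithin (hS t ht)

lemma d2x_eq (b : ℝ) (hb : 0 < b) {K : ℝ → ℝ → ℂ}
    (hK : ContDiffOn ℝ 2 (fun p : ℝ × ℝ => K p.1 p.2) (Icc (-b) b ×ˢ Icc (-b) b))
    {x t : ℝ} (hx : x ∈ Icc (-b) b) (ht : t ∈ Icc (-b) b) :
    d2x b K x t = pdx b (pdx b (fun p : ℝ × ℝ => K p.1 p.2)) (x, t) :=
  d2x_eq' hb hK hx ht

lemma d2t_eq (b : ℝ) (hb : 0 < b) {K : ℝ → ℝ → ℂ}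
    (hK : ContDiffOn ℝ 2 (fun p : ℝ × ℝ => K p.1 p.2) (Icc (-b) b ×ˢ Icc (-b) b))
    {x t : ℝ} (hx : x ∈ Icc (-b) b) (ht : t ∈ Icc (-b) b) :
    d2t b K x t = pdt b (pdt b (fun p : ℝ × ℝ => K p.1 p.2)) (x, t) :=
  d2t_eq' hb hK hx ht

/-- change of the parameter `h` in the transmutation kernel. If `K₁` is a
transmutation kernel for `(q,h₁)`, then
`K₂(x,t) = (h₂−h₁)/2 + K₁(x,t) + ((h₂−h₁)/2)∫_t^x (K₁(x,s) − K₁(x,−s)) ds`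
is a transmutation kernel for `(q,h₂)`, and the corresponding operators are related by
`T_{h₂} u = T_{h₁} w` with `w(t) = u(t) + ((h₂−h₁)/2)∫_{−t}^t u(s) ds`. -/
theorem kernel_change_of_h
    (b : ℝ) (hb : 0 < b) (q : ℝ → ℂ) (hq : ContDiffOn ℝ 1 q (Set.Icc (-b) b))
    (h₁ h₂ : ℂ) (K₁ : ℝ → ℝ → ℂ) (hK₁ : IsTransmutationKernel b q h₁ K₁) :
    IsTransmutationKernel b q h₂
      (fun x t => (h₂ - h₁) / 2 + K₁ x t
        + (h₂ - h₁) / 2 * ∫ s in t..x, (K₁ x s - K₁ x (-s))) ∧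
    ∀ u : ℝ → ℂ, ContinuousOn u (Set.Icc (-b) b) → ∀ x ∈ Set.Icc (-b) b,
      u x + (∫ t in (-x)..x,
          ((h₂ - h₁) / 2 + K₁ x t + (h₂ - h₁) / 2 * ∫ s in t..x, (K₁ x s - K₁ x (-s))) * u t)
        = (u x + (h₂ - h₁) / 2 * ∫ s in (-x)..x, u s)
          + ∫ t in (-x)..x, K₁ x t * (u t + (h₂ - h₁) / 2 * ∫ s in (-t)..t, u s) := by

  obtain ⟨hK2, hKpde, hKdiag, hKanti⟩ := hK₁
  have hbneg : -b < b := by linarith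
  have hS : UniqueDiffOn ℝ (Icc (-b) b) := uniqueDiffOn_Icc hbneg
  have hQu : UniqueDiffOn ℝ (Icc (-b) b ×ˢ Icc (-b) b) := hS.prod hS
  have hzS : (0:ℝ) ∈ Icc (-b) b := h0S hb
  set c : ℂ := (h₂ - h₁) / 2 with hc
  set KJ : ℝ × ℝ → ℂ := fun p => K₁ p.1 p.2 with hKJ
  set Gf : ℝ × ℝ → ℂ := fun p => K₁ p.1 p.2 - K₁ p.1 (-p.2) with hGf
  set Kx : ℝ × ℝ → ℂ := pdx b KJ with hKx
  set Kt : ℝ × ℝ → ℂ := pdt b KJ with hKt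
  set Kxx : ℝ × ℝ → ℂ := pdx b (pdx b KJ) with hKxx
  set Ktt : ℝ × ℝ → ℂ := pdt b (pdt b KJ) with hKtt
  set Gx : ℝ × ℝ → ℂ := fun p => Kx p - Kx (p.1, -p.2) with hGx
  set Gxx : ℝ × ℝ → ℂ := fun p => Kxx p - Kxx (p.1, -p.2) with hGxx
  have hKJ1 : ContDiffOn ℝ 1 KJ (Icc (-b) b ×ˢ Icc (-b) b) := hK2.of_le one_le_two
  -- σ composition helper
  have hσc : ContDiffOn ℝ 2 (fun p : ℝ × ℝ => (p.1, -p.2)) (Icc (-b) b ×ˢ Icc (-b) b) :=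
    (contDiff_fst.prodMk contDiff_snd.neg).contDiffOn
  have hσmaps : MapsTo (fun p : ℝ × ℝ => (p.1, -p.2))
      (Icc (-b) b ×ˢ Icc (-b) b) (Icc (-b) b ×ˢ Icc (-b) b) :=
    fun p hp => Set.mk_mem_prod hp.1 (negS hp.2)
  have hσcont : ContinuousOn (fun p : ℝ × ℝ => (p.1, -p.2))
      (Icc (-b) b ×ˢ Icc (-b) b) := hσc.continuousOn
  have hGf2 : ContDiffOn ℝ 2 Gf (Icc (-b) b ×ˢ Icc (-b) b) :=
    hK2.sub (hK2.comp hσc hσmaps)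
  have hGf1 : ContDiffOn ℝ 1 Gf (Icc (-b) b ×ˢ Icc (-b) b) := hGf2.of_le one_le_two
  have hGfC : ContinuousOn Gf (Icc (-b) b ×ˢ Icc (-b) b) := hGf1.continuousOn
  have hKx1 : ContDiffOn ℝ 1 Kx (Icc (-b) b ×ˢ Icc (-b) b) := pdx_contDiffOn hb hK2
  have hKt1 : ContDiffOn ℝ 1 Kt (Icc (-b) b ×ˢ Icc (-b) b) := pdt_contDiffOn hb hK2
  have hGx1 : ContDiffOn ℝ 1 Gx (Icc (-b) b ×ˢ Icc (-b) b) :=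
    hKx1.sub (hKx1.comp (hσc.of_le one_le_two) hσmaps)
  have hGxC : ContinuousOn Gx (Icc (-b) b ×ˢ Icc (-b) b) := hGx1.continuousOn
  have hGxxC : ContinuousOn Gxx (Icc (-b) b ×ˢ Icc (-b) b) :=
    (pdx_continuousOn hb hKx1).sub ((pdx_continuousOn hb hKx1).comp hσcont hσmaps)
  have hKttC : ContinuousOn Ktt (Icc (-b) b ×ˢ Icc (-b) b) := pdt_continuousOn hb hKt1
  have hKtC : ContinuousOn Kt (Icc (-b) b ×ˢ Icc (-b) b) := hKt1.continuousOn
  -- slice continuity helper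
  have hsliceC : ∀ (H : ℝ × ℝ → ℂ), ContinuousOn H (Icc (-b) b ×ˢ Icc (-b) b) →
      ∀ x' ∈ Icc (-b) b, ContinuousOn (fun s => H (x', s)) (Icc (-b) b) := by
    intro H hH x' hx'
    exact hH.comp (continuous_const.prodMk continuous_id).continuousOn
      (fun s hs => Set.mk_mem_prod hx' hs)
  have hsliceCneg : ∀ (H : ℝ × ℝ → ℂ), ContinuousOn H (Icc (-b) b ×ˢ Icc (-b) b) →
      ∀ x' ∈ Icc (-b) b, ContinuousOn (fun s => H (x', -s)) (Icc (-b) b) := by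
    intro H hH x' hx'
    exact hH.comp (continuous_const.prodMk continuous_neg).continuousOn
      (fun s hs => Set.mk_mem_prod hx' (negS hs))
  -- derivative-in-x data for the primitive machinery
  have hdG : ∀ p ∈ Icc (-b) b ×ˢ Icc (-b) b,
      HasDerivWithinAt (fun x => Gf (x, p.2)) (Gx p) (Icc (-b) b) p.1 := by
    intro p hp
    exact (pdx_slice hKJ1 hp.1 hp.2).sub (pdx_slice hKJ1 hp.1 (negS hp.2))
  have hdGx : ∀ p ∈ Icc (-b) b ×ˢ Icc (-b) b,
      HasDerivWithinAt (fun x => Gx (x, p.2)) (Gxx p) (Icc (-b) b) p.1 := by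
    intro p hp
    exact (pdx_slice hKx1 hp.1 hp.2).sub (pdx_slice hKx1 hp.1 (negS hp.2))
  set Φ : ℝ × ℝ → ℂ := fun p => ∫ s in (0:ℝ)..p.2, Gf (p.1, s) with hΦ
  set Ψ : ℝ × ℝ → ℂ := fun p => ∫ s in (0:ℝ)..p.2, Gx (p.1, s) with hΨ
  set Ψx : ℝ × ℝ → ℂ := fun p => ∫ s in (0:ℝ)..p.2, Gxx (p.1, s) with hΨx
  have hΦ2 : ContDiffOn ℝ 2 Φ (Icc (-b) b ×ˢ Icc (-b) b) :=
    contDiffOn_primitive_two hb Gf Gx Gxx hGf1 hGx1 hGxxC hdG hdGx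
  -- Chasles rewriting of the kernel integral
  have hK2eqn : ∀ x' ∈ Icc (-b) b, ∀ t' ∈ Icc (-b) b,
      (∫ s in t'..x', (K₁ x' s - K₁ x' (-s))) = Φ (x', x') - Φ (x', t') := by
    intro x' hx' t' ht'
    have i1 : IntervalIntegrable (fun s => Gf (x', s)) volume 0 x' :=
      myInt (hsliceC Gf hGfC x' hx') hzS hx'
    have i2 : IntervalIntegrable (fun s => Gf (x', s)) volume 0 t' :=
      myInt (hsliceC Gf hGfC x' hx') hzS ht'
    exact (integral_interval_sub_left i1 i2).symm
  have hΨxChasles : ∀ x' ∈ Icc (-b) b, ∀ t' ∈ Icc (-b) b,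
      Ψx (x', x') - Ψx (x', t') = ∫ s in t'..x', Gxx (x', s) := by
    intro x' hx' t' ht'
    exact integral_interval_sub_left (myInt (hsliceC Gxx hGxxC x' hx') hzS hx')
      (myInt (hsliceC Gxx hGxxC x' hx') hzS ht')
  -- diagonal curve derivative of Φ and Ψ
  have hΦdiag : ∀ x' ∈ Icc (-b) b, HasDerivWithinAt (fun y => Φ (y, y))
      (Ψ (x', x') + Gf (x', x')) (Icc (-b) b) x' := by
    intro x' hx'
    have hγ : HasDerivWithinAt (fun y : ℝ => ((y:ℝ), (y:ℝ))) ((1:ℝ), (1:ℝ)) (Icc (-b) b) x' :=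
      (hasDerivWithinAt_id x' _).prodMk (hasDerivWithinAt_id x' _)
    have h := primitive_slice hb Gf Gx hGfC hGxC hdG hγ (fun y hy => Set.mk_mem_prod hy hy) hx'
    simpa using h
  have hΦx_t : ∀ t' ∈ Icc (-b) b, ∀ x' ∈ Icc (-b) b,
      HasDerivWithinAt (fun y => Φ (y, t')) (Ψ (x', t')) (Icc (-b) b) x' := by
    intro t' ht' x' hx'
    have hγ : HasDerivWithinAt (fun y : ℝ => ((y:ℝ), t')) ((1:ℝ), (0:ℝ)) (Icc (-b) b) x' :=
      (hasDerivWithinAt_id x' _).prodMk (hasDerivWithinAt_const x' _ t')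
    have h := primitive_slice hb Gf Gx hGfC hGxC hdG hγ (fun y hy => Set.mk_mem_prod hy ht') hx'
    simpa using h
  have hΦt : ∀ x' ∈ Icc (-b) b, ∀ t' ∈ Icc (-b) b,
      HasDerivWithinAt (fun y => Φ (x', y)) (Gf (x', t')) (Icc (-b) b) t' := by
    intro x' hx' t' ht'
    have hγ : HasDerivWithinAt (fun y : ℝ => (x', (y:ℝ))) ((0:ℝ), (1:ℝ)) (Icc (-b) b) t' :=
      (hasDerivWithinAt_const t' _ x').prodMk (hasDerivWithinAt_id t' _)
    have h := primitive_slice hb Gf Gx hGfC hGxC hdG hγ (fun y hy => Set.mk_mem_prod hx' hy) ht'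
    simpa using h
  have hΨdiag : ∀ x' ∈ Icc (-b) b, HasDerivWithinAt (fun y => Ψ (y, y))
      (Ψx (x', x') + Gx (x', x')) (Icc (-b) b) x' := by
    intro x' hx'
    have hγ : HasDerivWithinAt (fun y : ℝ => ((y:ℝ), (y:ℝ))) ((1:ℝ), (1:ℝ)) (Icc (-b) b) x' :=
      (hasDerivWithinAt_id x' _).prodMk (hasDerivWithinAt_id x' _)
    have h := primitive_slice hb Gx Gxx hGxC hGxxC hdGx hγ (fun y hy => Set.mk_mem_prod hy hy) hx'
    simpa using h
  have hΨx_t : ∀ t' ∈ Icc (-b) b, ∀ x' ∈ Icc (-b) b,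
      HasDerivWithinAt (fun y => Ψ (y, t')) (Ψx (x', t')) (Icc (-b) b) x' := by
    intro t' ht' x' hx'
    have hγ : HasDerivWithinAt (fun y : ℝ => ((y:ℝ), t')) ((1:ℝ), (0:ℝ)) (Icc (-b) b) x' :=
      (hasDerivWithinAt_id x' _).prodMk (hasDerivWithinAt_const x' _ t')
    have h := primitive_slice hb Gx Gxx hGxC hGxxC hdGx hγ (fun y hy => Set.mk_mem_prod hy ht') hx'
    simpa using h
  -- FTC for q within the interval
  have hqFTC : ∀ x' ∈ Icc (-b) b, HasDerivWithinAt (fun y => ∫ s in (0:ℝ)..y, q s) (q x')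
      (Icc (-b) b) x' := by
    intro x' hx'
    haveI : intervalIntegral.FTCFilter x' (nhdsWithin x' (Icc (-b) b))
        (nhdsWithin x' (Icc (-b) b)) := by
      exact intervalIntegral.FTCFilter.nhdsIcc (h := ⟨hx'⟩)
    exact intervalIntegral.integral_hasDerivWithinAt_right
      (myInt hq.continuousOn hzS hx')
      ⟨Icc (-b) b, self_mem_nhdsWithin, hq.continuousOn.aestronglyMeasurable measurableSet_Icc⟩
      (hq.continuousOn x' hx')
  -- Goursat diagonal values of Gf
  have hGdiagEq : ∀ x' ∈ Icc (-b) b, Gf (x', x') = (1/2 : ℂ) * ∫ s in (0:ℝ)..x', q s := by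
    intro x' hx'
    show K₁ x' x' - K₁ x' (-x') = _
    rw [hKdiag x' hx', hKanti x' hx']
    ring
  -- PART 1 : transmutation kernel property
  have hPart1 : IsTransmutationKernel b q h₂
      (fun x t => c + K₁ x t + c * ∫ s in t..x, (K₁ x s - K₁ x (-s))) := by
    refine ⟨?_, ?_, ?_, ?_⟩
    · -- smoothness
      have hdiagmap : ContDiffOn ℝ 2 (fun p : ℝ × ℝ => Φ (p.1, p.1))
          (Icc (-b) b ×ˢ Icc (-b) b) :=
        hΦ2.comp (contDiff_fst.prodMk contDiff_fst).contDiffOn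
          (fun p hp => Set.mk_mem_prod hp.1 hp.1)
      have hsm : ContDiffOn ℝ 2
          (fun p : ℝ × ℝ => c + K₁ p.1 p.2 + c * (Φ (p.1, p.1) - Φ p))
          (Icc (-b) b ×ˢ Icc (-b) b) :=
        (contDiffOn_const.add hK2).add (contDiffOn_const.mul (hdiagmap.sub hΦ2))
      apply hsm.congr
      intro p hp
      show c + K₁ p.1 p.2 + c * ∫ s in p.2..p.1, (K₁ p.1 s - K₁ p.1 (-s))
        = c + K₁ p.1 p.2 + c * (Φ (p.1, p.1) - Φ p)
      rw [hK2eqn p.1 hp.1 p.2 hp.2]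
    · -- PDE
      intro x hx t ht
      -- inner x-derivative
      have hwd : ∀ x' ∈ Icc (-b) b, HasDerivWithinAt
          (fun x'' => c + K₁ x'' t + c * ∫ s in t..x'', (K₁ x'' s - K₁ x'' (-s)))
          (Kx (x', t) + c * (Ψ (x', x') + Gf (x', x') - Ψ (x', t))) (Icc (-b) b) x' := by
        intro x' hx'
        have base : HasDerivWithinAt
            (fun x'' => c + K₁ x'' t + c * (Φ (x'', x'') - Φ (x'', t)))
            (Kx (x', t) + c * (Ψ (x', x') + Gf (x', x') - Ψ (x', t))) (Icc (-b) b) x' := by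
          have h1 := pdx_slice hKJ1 hx' ht
          have h2 := (hΦdiag x' hx').sub (hΦx_t t ht x' hx')
          have h3 := ((hasDerivWithinAt_const x' (Icc (-b) b) c).add h1).add (h2.const_mul c)
          exact h3.congr_deriv (by simp only [zero_add, hKx])
        exact base.congr (fun y hy => by rw [hK2eqn y hy t ht]) (by rw [hK2eqn x' hx' t ht])
      have hinner : ∀ x' ∈ Icc (-b) b,
          derivWithin (fun x'' => c + K₁ x'' t + c * ∫ s in t..x'', (K₁ x'' s - K₁ x'' (-s)))
            (Icc (-b) b) x'
          = Kx (x', t) + c * (Ψ (x', x') + Gf (x', x') - Ψ (x', t)) :=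
        fun x' hx' => (hwd x' hx').derivWithin (hS x' hx')
      have hd2xval : d2x b (fun x t => c + K₁ x t + c * ∫ s in t..x, (K₁ x s - K₁ x (-s))) x t
          = Kxx (x, t) + c * ((Ψx (x, x) + Gx (x, x) + (1/2 : ℂ) * q x) - Ψx (x, t)) := by
        show derivWithin _ (Icc (-b) b) x = _
        rw [derivWithin_congr
          (fun x' hx' => hinner x' hx')
          (hinner x hx)]
        have hGfdiagD : HasDerivWithinAt (fun y => Gf (y, y)) ((1/2 : ℂ) * q x)
            (Icc (-b) b) x := by
          have h := ((hqFTC x hx).const_mul ((1:ℂ)/2))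
          exact h.congr (fun y hy => hGdiagEq y hy) (hGdiagEq x hx)
        have h1 := pdx_slice hKx1 hx ht
        have h2 := ((hΨdiag x hx).add hGfdiagD).sub (hΨx_t t ht x hx)
        exact (h1.add (h2.const_mul c)).derivWithin (hS x hx)
      -- inner t-derivative
      have hwd2 : ∀ t' ∈ Icc (-b) b, HasDerivWithinAt
          (fun t'' => c + K₁ x t'' + c * ∫ s in t''..x, (K₁ x s - K₁ x (-s)))
          (Kt (x, t') + c * (0 - Gf (x, t'))) (Icc (-b) b) t' := by
        intro t' ht'
        have base : HasDerivWithinAt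
            (fun t'' => c + K₁ x t'' + c * (Φ (x, x) - Φ (x, t'')))
            (Kt (x, t') + c * (0 - Gf (x, t'))) (Icc (-b) b) t' := by
          have h1 := pdt_slice hKJ1 hx ht'
          have h2 := (hasDerivWithinAt_const t' (Icc (-b) b) (Φ (x, x))).sub (hΦt x hx t' ht')
          exact ((hasDerivWithinAt_const t' (Icc (-b) b) c).add h1).add
            (h2.const_mul c) |>.congr_deriv (by ring)
        exact base.congr (fun y hy => by rw [hK2eqn x hx y hy]) (by rw [hK2eqn x hx t' ht'])
      have hinner2 : ∀ t' ∈ Icc (-b) b,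
          derivWithin (fun t'' => c + K₁ x t'' + c * ∫ s in t''..x, (K₁ x s - K₁ x (-s)))
            (Icc (-b) b) t'
          = Kt (x, t') + c * (0 - Gf (x, t')) :=
        fun t' ht' => (hwd2 t' ht').derivWithin (hS t' ht')
      have hd2tval : d2t b (fun x t => c + K₁ x t + c * ∫ s in t..x, (K₁ x s - K₁ x (-s))) x t
          = Ktt (x, t) + c * (0 - (Kt (x, t) + Kt (x, -t))) := by
        show derivWithin _ (Icc (-b) b) t = _
        rw [derivWithin_congr (fun t' ht' => hinner2 t' ht') (hinner2 t ht)]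
        have h1 := pdt_slice hKt1 hx ht
        have hGft : HasDerivWithinAt (fun t' => Gf (x, t')) (Kt (x, t) + Kt (x, -t))
            (Icc (-b) b) t := by
          have ha := pdt_slice hKJ1 hx ht
          have hb' := slice_negt hKJ1 hx ht
          exact (ha.sub hb').congr_deriv (by ring)
        have h2 := (hasDerivWithinAt_const t (Icc (-b) b) (0:ℂ)).sub hGft
        exact (h1.add (h2.const_mul c)).derivWithin (hS t ht)
      -- PDE of K₁ in partial-derivative form
      have hpde' : ∀ x' ∈ Icc (-b) b, ∀ t' ∈ Icc (-b) b,
          Kxx (x', t') - q x' * K₁ x' t' = Ktt (x', t') := by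
        intro x' hx' t' ht'
        have h := hKpde x' hx' t' ht'
        rwa [d2x_eq b hb hK2 hx' ht', d2t_eq b hb hK2 hx' ht'] at h
      -- FTC for the t-partials
      have hFTC2 : (∫ s in t..x, (Ktt (x, s) - Ktt (x, -s)))
          = (Kt (x, x) + Kt (x, -x)) - (Kt (x, t) + Kt (x, -t)) := by
        refine integral_eq_sub_of_hasDeriv_right (f := fun s => Kt (x, s) + Kt (x, -s))
          (f' := fun s => Ktt (x, s) - Ktt (x, -s)) ?_ ?_ ?_
        · exact ((hsliceC Kt hKtC x hx).add (hsliceCneg Kt hKtC x hx)).mono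
            (uIcc_subset_S ht hx)
        · intro s hs
          have hsS : s ∈ Icc (-b) b := by
            constructor
            · have h1 : min t x ≥ -b := le_min ht.1 hx.1
              linarith [hs.1]
            · have h2 : max t x ≤ b := max_le ht.2 hx.2
              linarith [hs.2]
          have hnhds : Icc (-b) b ∈ nhds s := by
            apply Icc_mem_nhds
            · have h1 : min t x ≥ -b := le_min ht.1 hx.1
              linarith [hs.1]
            · have h2 : max t x ≤ b := max_le ht.2 hx.2
              linarith [hs.2]
          have hder : HasDerivWithinAt (fun s' => Kt (x, s') + Kt (x, -s'))
              (Ktt (x, s) - Ktt (x, -s)) (Icc (-b) b) s := by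
            have ha := pdt_slice hKt1 hx hsS
            have hb' := slice_negt hKt1 hx hsS
            exact (ha.add hb').congr_deriv (by ring)
          exact ((hder.hasDerivAt hnhds).hasDerivWithinAt)
        · apply ContinuousOn.intervalIntegrable
          exact (((hsliceC Ktt hKttC x hx).sub (hsliceCneg Ktt hKttC x hx)).mono
            (uIcc_subset_S ht hx))
      -- pointwise PDE applied inside the integral
      have hGxxpt : ∀ s ∈ uIcc t x, Gxx (x, s)
          = q x * Gf (x, s) + (Ktt (x, s) - Ktt (x, -s)) := by
        intro s hs
        have hsS : s ∈ Icc (-b) b := uIcc_subset_S ht hx hs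
        have e1 := hpde' x hx s hsS
        have e2 := hpde' x hx (-s) (negS hsS)
        show Kxx (x, s) - Kxx (x, -s) = q x * (K₁ x s - K₁ x (-s)) + (Ktt (x, s) - Ktt (x, -s))
        linear_combination e1 - e2
      have hIntGxx : (∫ s in t..x, Gxx (x, s))
          = q x * (∫ s in t..x, Gf (x, s))
            + ((Kt (x, x) + Kt (x, -x)) - (Kt (x, t) + Kt (x, -t))) := by
        rw [intervalIntegral.integral_congr hGxxpt]
        rw [integral_add (f := fun s => q x * Gf (x, s)) (g := fun s => Ktt (x, s) - Ktt (x, -s))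
          ((continuousOn_const.mul
            ((hsliceC Gf hGfC x hx).mono (uIcc_subset_S ht hx))).intervalIntegrable)
          ((((hsliceC Ktt hKttC x hx).sub (hsliceCneg Ktt hKttC x hx)).mono
            (uIcc_subset_S ht hx)).intervalIntegrable)]
        rw [intervalIntegral.integral_const_mul, hFTC2]
      -- diagonal identities
      have hdiag1 : Kx (x, x) + Kt (x, x) = (1/2 : ℂ) * q x := by
        have hfun := slice_diag hKJ1 hx
        have hfun2 : HasDerivWithinAt (fun x' => K₁ x' x') ((1/2 : ℂ) * q x)
            (Icc (-b) b) x := by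
          have h := ((hqFTC x hx).const_mul ((1:ℂ)/2)).const_add (h₁ / 2)
          exact h.congr (fun y hy => hKdiag y hy) (hKdiag x hx)
        have e1 := hfun.derivWithin (hS x hx)
        have e2 := hfun2.derivWithin (hS x hx)
        exact e1.symm.trans e2
      have hdiag2 : Kx (x, -x) - Kt (x, -x) = 0 := by
        have hfun := slice_anti hKJ1 hx
        have hfun2 : HasDerivWithinAt (fun x' => K₁ x' (-x')) (0 : ℂ) (Icc (-b) b) x := by
          have h := hasDerivWithinAt_const x (Icc (-b) b) (h₁ / 2)
          exact h.congr (fun y hy => hKanti y hy) (hKanti x hx)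
        have e1 := hfun.derivWithin (hS x hx)
        have e2 := hfun2.derivWithin (hS x hx)
        exact e1.symm.trans e2
      -- assemble
      rw [hd2xval, hd2tval]
      have hJ : (∫ s in t..x, (K₁ x s - K₁ x (-s))) = ∫ s in t..x, Gf (x, s) := rfl
      have hgx : Gx (x, x) = Kx (x, x) - Kx (x, -x) := rfl
      have hchas := hΨxChasles x hx t ht
      show _ - q x * (c + K₁ x t + c * ∫ s in t..x, (K₁ x s - K₁ x (-s))) = _
      rw [hJ] at *
      linear_combination hpde' x hx t ht + c * hchas + c * hIntGxx + c * hgx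
        + c * hdiag1 - c * hdiag2
    · -- Goursat diagonal
      intro x hx
      show c + K₁ x x + c * ∫ s in x..x, (K₁ x s - K₁ x (-s)) = _
      rw [intervalIntegral.integral_same, hKdiag x hx]
      ring
    · -- Goursat antidiagonal
      intro x hx
      show c + K₁ x (-x) + c * ∫ s in (-x)..x, (K₁ x s - K₁ x (-s)) = _
      have hodd : (∫ s in (-x)..x, (K₁ x s - K₁ x (-s))) = 0 := by
        have h := intervalIntegral.integral_comp_neg (fun s => K₁ x s - K₁ x (-s))
          (a := -x) (b := x)
        simp only [neg_neg] at h
        have h2 : (∫ s in (-x)..x, (K₁ x (-s) - K₁ x s))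
            = ∫ s in (-x)..x, (K₁ x s - K₁ x (-s)) := h
        have h3 : (∫ s in (-x)..x, (K₁ x (-s) - K₁ x s))
            = - ∫ s in (-x)..x, (K₁ x s - K₁ x (-s)) := by
          rw [← intervalIntegral.integral_neg]
          congr 1
          ext s
          ring
        linear_combination (h2.symm.trans h3) / 2
      rw [hodd, hKanti x hx]
      ring
  refine ⟨hPart1, ?_⟩
  intro u hu x hx
  have hxm : -x ∈ Icc (-b) b := negS hx
  have huIccS : uIcc (-x) x ⊆ Icc (-b) b := uIcc_subset_S hxm hx
  have hneg_mem : MapsTo (fun t : ℝ => -t) (uIcc (-x) x) (uIcc (-x) x) := by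
    intro t ht
    show -t ∈ uIcc (-x) x
    rcases le_total 0 x with h | h
    · rw [uIcc_of_le (by linarith : -x ≤ x)] at ht ⊢
      rw [mem_Icc] at ht ⊢
      exact ⟨by linarith [ht.2], by linarith [ht.1]⟩
    · rw [uIcc_of_ge (by linarith : x ≤ -x)] at ht ⊢
      rw [mem_Icc] at ht ⊢
      exact ⟨by linarith [ht.2], by linarith [ht.1]⟩
  set W : ℝ → ℂ := fun t => ∫ s in (-x)..t, u s with hWdef
  have hintu : IntervalIntegrable u volume (-x) x := myInt hu hxm hx
  have hWcont : ContinuousOn W (uIcc (-x) x) :=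
    intervalIntegral.continuousOn_primitive_interval' hintu left_mem_uIcc
  have hWneg : ContinuousOn (fun t => W (-t)) (uIcc (-x) x) :=
    hWcont.comp continuous_neg.continuousOn hneg_mem
  have hVW : ∀ t ∈ uIcc (-x) x, W t - W (-t) = ∫ s in (-t)..t, u s := by
    intro t ht
    exact integral_interval_sub_left (myInt hu hxm (huIccS ht))
      (myInt hu hxm (huIccS (hneg_mem ht)))
  have hΦxslice : ContinuousOn (fun t => Φ (x, t)) (Icc (-b) b) :=
    hΦ2.continuousOn.comp (continuous_const.prodMk continuous_id).continuousOn
      (fun s hs => Set.mk_mem_prod hx hs)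
  have hAeq : ∀ t ∈ Icc (-b) b,
      (∫ s in t..x, (K₁ x s - K₁ x (-s))) = Φ (x, x) - Φ (x, t) :=
    fun t ht => hK2eqn x hx t ht
  have hAcont : ContinuousOn (fun t => ∫ s in t..x, (K₁ x s - K₁ x (-s))) (uIcc (-x) x) :=
    ((continuousOn_const.sub hΦxslice).congr (fun t ht => hAeq t ht)).mono huIccS
  have hGfx : ContinuousOn (fun t => Gf (x, t)) (Icc (-b) b) := hsliceC Gf hGfC x hx
  have hKsl : ContinuousOn (fun t => K₁ x t) (Icc (-b) b) :=
    hsliceC KJ hK2.continuousOn x hx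
  have hKsln : ContinuousOn (fun t => K₁ x (-t)) (Icc (-b) b) :=
    hsliceCneg KJ hK2.continuousOn x hx
  have hucc : ContinuousOn u (uIcc (-x) x) := hu.mono huIccS
  have hIoo : ∀ t ∈ Ioo (min (-x) x) (max (-x) x), Icc (-b) b ∈ nhds t := by
    intro t ht
    apply Icc_mem_nhds
    · have h1 := le_min hxm.1 hx.1
      linarith [ht.1]
    · have h2 := max_le hxm.2 hx.2
      linarith [ht.2]
  have hderWA : ∀ t ∈ Ioo (min (-x) x) (max (-x) x),
      HasDerivAt (fun τ => W τ * ∫ s in τ..x, (K₁ x s - K₁ x (-s)))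
        (u t * (∫ s in t..x, (K₁ x s - K₁ x (-s))) - W t * Gf (x, t)) t := by
    intro t ht
    have htS : t ∈ Icc (-b) b := mem_of_mem_nhds (hIoo t ht)
    have hW' : HasDerivAt W (u t) t :=
      intervalIntegral.integral_hasDerivAt_right (myInt hu hxm htS)
        ⟨Icc (-b) b, hIoo t ht, hu.aestronglyMeasurable measurableSet_Icc⟩
        (hu.continuousAt (hIoo t ht))
    have hΦt' : HasDerivAt (fun τ => Φ (x, τ)) (Gf (x, t)) t :=
      (hΦt x hx t htS).hasDerivAt (hIoo t ht)
    have hA' : HasDerivAt (fun τ => ∫ s in τ..x, (K₁ x s - K₁ x (-s))) (-Gf (x, t)) t := by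
      have h2 : HasDerivAt (fun τ => Φ (x, x) - Φ (x, τ)) (-Gf (x, t)) t := by
        exact ((hasDerivAt_const t (Φ (x, x))).sub hΦt').congr_deriv (by simp)
      apply h2.congr_of_eventuallyEq
      exact Filter.eventuallyEq_of_mem (hIoo t ht) (fun τ hτ => hAeq τ hτ)
    have h3 := hW'.mul hA'
    have h4 : u t * (∫ s in t..x, (K₁ x s - K₁ x (-s))) + W t * -Gf (x, t)
        = u t * (∫ s in t..x, (K₁ x s - K₁ x (-s))) - W t * Gf (x, t) := by ring
    rw [h4] at h3
    exact h3
  have hA0 : (∫ s in x..x, (K₁ x s - K₁ x (-s))) = 0 := intervalIntegral.integral_same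
  have hW0 : W (-x) = 0 := intervalIntegral.integral_same
  have hbyparts : (∫ t in (-x)..x,
      (u t * (∫ s in t..x, (K₁ x s - K₁ x (-s))) - W t * Gf (x, t))) = 0 := by
    have h := integral_eq_sub_of_hasDeriv_right
      (f := fun t => W t * ∫ s in t..x, (K₁ x s - K₁ x (-s)))
      (f' := fun t => u t * (∫ s in t..x, (K₁ x s - K₁ x (-s))) - W t * Gf (x, t))
      (hWcont.mul hAcont) (fun t ht => (hderWA t ht).hasDerivWithinAt)
      (((hucc.mul hAcont).sub (hWcont.mul (hGfx.mono huIccS))).intervalIntegrable)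
    rw [h]
    simp [hA0, hW0]
  have iuA : IntervalIntegrable (fun t => u t * ∫ s in t..x, (K₁ x s - K₁ x (-s)))
      volume (-x) x := (hucc.mul hAcont).intervalIntegrable
  have iWG : IntervalIntegrable (fun t => W t * Gf (x, t)) volume (-x) x :=
    (hWcont.mul (hGfx.mono huIccS)).intervalIntegrable
  have h1 : (∫ t in (-x)..x, u t * ∫ s in t..x, (K₁ x s - K₁ x (-s)))
      = ∫ t in (-x)..x, W t * Gf (x, t) :=
    sub_eq_zero.mp ((integral_sub iuA iWG).symm.trans hbyparts)
  have iWK : IntervalIntegrable (fun t => W t * K₁ x t) volume (-x) x :=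
    (hWcont.mul (hKsl.mono huIccS)).intervalIntegrable
  have iWKn : IntervalIntegrable (fun t => W t * K₁ x (-t)) volume (-x) x :=
    (hWcont.mul (hKsln.mono huIccS)).intervalIntegrable
  have iWnK : IntervalIntegrable (fun t => W (-t) * K₁ x t) volume (-x) x :=
    (hWneg.mul (hKsl.mono huIccS)).intervalIntegrable
  have h2a : (∫ t in (-x)..x, W t * Gf (x, t))
      = (∫ t in (-x)..x, W t * K₁ x t) - ∫ t in (-x)..x, W t * K₁ x (-t) := by
    rw [← integral_sub iWK iWKn]
    apply intervalIntegral.integral_congr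
    intro t ht
    show W t * (K₁ x t - K₁ x (-t)) = W t * K₁ x t - W t * K₁ x (-t)
    ring
  have h2b : (∫ t in (-x)..x, W t * K₁ x (-t)) = ∫ t in (-x)..x, W (-t) * K₁ x t := by
    have h := intervalIntegral.integral_comp_neg (fun t => W (-t) * K₁ x t) (a := -x) (b := x)
    simp only [neg_neg] at h
    exact h
  have h2 : (∫ t in (-x)..x, W t * Gf (x, t))
      = ∫ t in (-x)..x, (W t - W (-t)) * K₁ x t := by
    rw [h2a, h2b, ← integral_sub iWK iWnK]
    apply intervalIntegral.integral_congr
    intro t ht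
    ring
  have iKu : IntervalIntegrable (fun t => K₁ x t * u t) volume (-x) x :=
    ((hKsl.mono huIccS).mul hucc).intervalIntegrable
  have icu : IntervalIntegrable (fun t => c * u t) volume (-x) x :=
    (continuousOn_const.mul hucc).intervalIntegrable
  have icuA : IntervalIntegrable
      (fun t => c * (u t * ∫ s in t..x, (K₁ x s - K₁ x (-s)))) volume (-x) x :=
    (continuousOn_const.mul (hucc.mul hAcont)).intervalIntegrable
  have hLHS : (∫ t in (-x)..x,
        (c + K₁ x t + c * ∫ s in t..x, (K₁ x s - K₁ x (-s))) * u t)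
      = c * (∫ s in (-x)..x, u s) + (∫ t in (-x)..x, K₁ x t * u t)
        + c * ∫ t in (-x)..x, u t * ∫ s in t..x, (K₁ x s - K₁ x (-s)) := by
    have e : EqOn
        (fun t => (c + K₁ x t + c * ∫ s in t..x, (K₁ x s - K₁ x (-s))) * u t)
        (fun t => c * u t + (K₁ x t * u t
          + c * (u t * ∫ s in t..x, (K₁ x s - K₁ x (-s))))) (uIcc (-x) x) :=
      fun t ht => by ring
    rw [intervalIntegral.integral_congr e, integral_add icu (iKu.add icuA),
      integral_add iKu icuA, intervalIntegral.integral_const_mul,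
      intervalIntegral.integral_const_mul]
    ring
  have iVK : IntervalIntegrable (fun t => c * ((W t - W (-t)) * K₁ x t)) volume (-x) x :=
    (continuousOn_const.mul ((hWcont.sub hWneg).mul (hKsl.mono huIccS))).intervalIntegrable
  have hRHS : (∫ t in (-x)..x, K₁ x t * (u t + c * ∫ s in (-t)..t, u s))
      = (∫ t in (-x)..x, K₁ x t * u t)
        + c * ∫ t in (-x)..x, (W t - W (-t)) * K₁ x t := by
    have e : EqOn (fun t => K₁ x t * (u t + c * ∫ s in (-t)..t, u s))
        (fun t => K₁ x t * u t + c * ((W t - W (-t)) * K₁ x t)) (uIcc (-x) x) := by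
      intro t ht
      simp only
      rw [← hVW t ht]
      ring
    rw [intervalIntegral.integral_congr e, integral_add iKu iVK,
      intervalIntegral.integral_const_mul]
  rw [hLHS, hRHS, h1, h2]
  ring
end

section
/- Let C > 0, ε > 0, ω ∈ ℂ with |Im ω| ≤ C, and suppose |F(x,t) − F_N(x,t)| ≤ ε for all 0 ≤ t ≤ x ≤ b. Define c(ω,x) := cos(ωx) + ∫₀ˣ F(x,t)·cos(ωt) dt and c_N(ω,x) := cos(ωx) + ∫₀ˣ F_N(x,t)·cos(ωt) dt. Then for every x ∈ [0,b], |c(ω,x) − c_N(ω,x)| ≤ ε·sinh(Cx)/C. -/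
open Set MeasureTheory Filter

lemma norm_cos_le_cosh_im (z : ℂ) : ‖Complex.cos z‖ ≤ Real.cosh z.im := by
  have h := Complex.cos_eq z
  have hre : (Complex.cos z).re = Real.cos z.re * Real.cosh z.im := by
    rw [h]; simp [Complex.cos_ofReal_re, Complex.cosh_ofReal_re, Complex.sin_ofReal_re, Complex.sinh_ofReal_re, Complex.cos_ofReal_im, Complex.sinh_ofReal_im]
  have him : (Complex.cos z).im = -(Real.sin z.re * Real.sinh z.im) := by
    rw [h]; simp [Complex.cos_ofReal_re, Complex.cosh_ofReal_re, Complex.sin_ofReal_re, Complex.sinh_ofReal_re, Complex.cos_ofReal_im, Complex.sinh_ofReal_im]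
  have hsq : ‖Complex.cos z‖ ^ 2 = (Real.cos z.re * Real.cosh z.im) ^ 2
      + (Real.sin z.re * Real.sinh z.im) ^ 2 := by
    rw [Complex.sq_norm, Complex.normSq_apply, hre, him]
    ring
  have h1 : ‖Complex.cos z‖ ^ 2 ≤ Real.cosh z.im ^ 2 := by
    rw [hsq]
    nlinarith [Real.sin_sq_add_cos_sq z.re, Real.cosh_sq z.im,
      sq_nonneg (Real.sin z.re), sq_nonneg (Real.cos z.re), sq_nonneg (Real.sinh z.im)]
  nlinarith [norm_nonneg (Complex.cos z), Real.cosh_pos z.im]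

/-- if the kernels `F` and `F_N` differ by at most `ε` on the triangle
`0 ≤ t ≤ x ≤ b`, then the corresponding cosine-type solutions differ by at most
`ε sinh(Cx)/C` for every `ω` in the strip `|Im ω| ≤ C`. -/
theorem cosine_solution_uniform_error
    (b : ℝ) (hb : 0 < b) (F FN : ℝ → ℝ → ℂ)
    (hF : ContinuousOn (fun p : ℝ × ℝ => F p.1 p.2)
      {p : ℝ × ℝ | 0 ≤ p.2 ∧ p.2 ≤ p.1 ∧ p.1 ≤ b})
    (hFN : ContinuousOn (fun p : ℝ × ℝ => FN p.1 p.2)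
      {p : ℝ × ℝ | 0 ≤ p.2 ∧ p.2 ≤ p.1 ∧ p.1 ≤ b})
    (C : ℝ) (hC : 0 < C) (ε : ℝ) (hε : 0 < ε)
    (ω : ℂ) (hω : |ω.im| ≤ C)
    (hclose : ∀ x t : ℝ, 0 ≤ t → t ≤ x → x ≤ b → ‖F x t - FN x t‖ ≤ ε) :
    ∀ x : ℝ, x ∈ Set.Icc 0 b →
      ‖(Complex.cos (ω * x) + ∫ t in (0:ℝ)..x, F x t * Complex.cos (ω * t))
          - (Complex.cos (ω * x) + ∫ t in (0:ℝ)..x, FN x t * Complex.cos (ω * t))‖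
        ≤ ε * Real.sinh (C * x) / C := by
  intro x hx
  obtain ⟨hx0, hxb⟩ := hx
  have hmaps : Set.MapsTo (fun t : ℝ => ((x : ℝ), t)) (Set.Icc 0 x)
      {p : ℝ × ℝ | 0 ≤ p.2 ∧ p.2 ≤ p.1 ∧ p.1 ≤ b} := fun t ht => ⟨ht.1, ht.2, hxb⟩
  have hcont : ContinuousOn (fun t : ℝ => Complex.cos (ω * t)) (Set.Icc 0 x) :=
    (Complex.continuous_cos.comp (continuous_const.mul Complex.continuous_ofReal)).continuousOn
  have hcF : ContinuousOn (fun t : ℝ => F x t) (Set.Icc 0 x) :=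
    hF.comp (Continuous.continuousOn (by fun_prop)) hmaps
  have hcFN : ContinuousOn (fun t : ℝ => FN x t) (Set.Icc 0 x) :=
    hFN.comp (Continuous.continuousOn (by fun_prop)) hmaps
  have hiF : IntervalIntegrable (fun t => F x t * Complex.cos (ω * t)) volume 0 x := by
    apply ContinuousOn.intervalIntegrable
    rw [Set.uIcc_of_le hx0]; exact hcF.mul hcont
  have hiFN : IntervalIntegrable (fun t => FN x t * Complex.cos (ω * t)) volume 0 x := by
    apply ContinuousOn.intervalIntegrable
    rw [Set.uIcc_of_le hx0]; exact hcFN.mul hcont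
  rw [add_sub_add_left_eq_sub, ← intervalIntegral.integral_sub hiF hiFN]
  have hbd : ∀ t ∈ Set.uIoc (0:ℝ) x,
      ‖F x t * Complex.cos (ω * t) - FN x t * Complex.cos (ω * t)‖ ≤ ε * Real.cosh (C * t) := by
    intro t ht
    rw [Set.uIoc_of_le hx0] at ht
    have ht0 : 0 ≤ t := le_of_lt ht.1
    have htx : t ≤ x := ht.2
    have h1 : ‖F x t * Complex.cos (ω * t) - FN x t * Complex.cos (ω * t)‖
        = ‖F x t - FN x t‖ * ‖Complex.cos (ω * t)‖ := by
      rw [← sub_mul, norm_mul]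
    rw [h1]
    have h2 : ‖Complex.cos (ω * t)‖ ≤ Real.cosh (C * t) := by
      refine (norm_cos_le_cosh_im _).trans ?_
      have him : (ω * (t:ℂ)).im = ω.im * t := by simp
      rw [him]
      rw [Real.cosh_le_cosh]
      rw [abs_of_nonneg (by positivity : (0:ℝ) ≤ C * t), abs_mul, abs_of_nonneg ht0]
      exact mul_le_mul_of_nonneg_right hω ht0
    exact mul_le_mul (hclose x t ht0 htx hxb) h2 (norm_nonneg _)
      (le_of_lt hε)
  have hgint : IntervalIntegrable (fun t => ε * Real.cosh (C * t)) volume 0 x := by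
    apply Continuous.intervalIntegrable; fun_prop
  have key := intervalIntegral.norm_integral_le_abs_of_norm_le
    (f := fun t => F x t * Complex.cos (ω * t) - FN x t * Complex.cos (ω * t))
    (g := fun t => ε * Real.cosh (C * t)) (μ := volume) (a := 0) (b := x)
    ((MeasureTheory.ae_restrict_iff' measurableSet_uIoc).2 (Filter.Eventually.of_forall hbd)) hgint
  refine key.trans ?_
  have hval : (∫ t in (0:ℝ)..x, ε * Real.cosh (C * t)) = ε * Real.sinh (C * x) / C := by
    rw [intervalIntegral.integral_const_mul]
    rw [intervalIntegral.integral_comp_mul_left (fun u => Real.cosh u) (ne_of_gt hC)]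
    have hcs : (∫ u in (0:ℝ)..C*x, Real.cosh u) = Real.sinh (C*x) - Real.sinh 0 :=
      intervalIntegral.integral_eq_sub_of_hasDerivAt (fun u _ => Real.hasDerivAt_sinh u)
        (Real.continuous_cosh.intervalIntegrable _ _)
    rw [smul_eq_mul, mul_zero, hcs, Real.sinh_zero]
    ring
  rw [hval, abs_of_nonneg]
  positivity
end
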